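/- arXiv:1504.07863 — 5 statements merged into one kernel-verified Lean document; each statement's English description precedes it below -/
import Mathlib

section
/- The WOWA operator is monotone: if a, a' ∈ ℝ^K satisfy a_j ≥ a'_j for all j, then wowa_{(v,p)}(a) ≥ wowa_{(v,p)}(a'). -/
open Finset

/-- The piecewise linear function `w*` induced by the weight vector `v`:
`w*(0)=0`, `w*(j/K) = ∑_{i≤j} v i`, linear on each `[(j-1)/K, j/K]`. -/
noncomputable def wstar (K : ℕ) (v : Fin K → ℝ) (t : ℝ) : ℝ :=
  ∑ i : Fin K, v i * min 1 (max 0 (t * (K : ℝ) - (i.1 : ℝ)))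

/-- The WOWA weight `ω_j = w*(∑_{i≤j} p_{σ(i)}) - w*(∑_{i<j} p_{σ(i)})`. -/
noncomputable def wowaWeight (K : ℕ) (v p : Fin K → ℝ) (σ : Equiv.Perm (Fin K))
    (j : Fin K) : ℝ :=
  wstar K v (∑ i ∈ Finset.Iic j, p (σ i)) - wstar K v (∑ i ∈ Finset.Iio j, p (σ i))

/-- The WOWA aggregation of `a` relative to a permutation `σ`
(sorting `a` nonincreasingly gives the WOWA value). -/
noncomputable def wowaW (K : ℕ) (v p : Fin K → ℝ) (σ : Equiv.Perm (Fin K))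
    (a : Fin K → ℝ) : ℝ :=
  ∑ j : Fin K, wowaWeight K v p σ j * a (σ j)

/-! ### Auxiliary lemmas -/

lemma wstar_mono {K : ℕ} (v : Fin K → ℝ) (hv0 : ∀ j, 0 ≤ v j) :
    Monotone (wstar K v) := by
  intro s t hst
  apply Finset.sum_le_sum
  intro i _
  have h1 : s * (K : ℝ) ≤ t * (K : ℝ) :=
    mul_le_mul_of_nonneg_right hst (Nat.cast_nonneg K)
  exact mul_le_mul_of_nonneg_left
    (min_le_min le_rfl (max_le_max le_rfl (by linarith))) (hv0 i)

lemma wstar_zero {K : ℕ} (v : Fin K → ℝ) : wstar K v 0 = 0 := by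
  unfold wstar
  apply Finset.sum_eq_zero
  intro i _
  have h1 : (0 : ℝ) * (K : ℝ) - (i.1 : ℝ) ≤ 0 := by
    have : (0 : ℝ) ≤ (i.1 : ℝ) := Nat.cast_nonneg _
    linarith
  rw [max_eq_left h1, min_eq_right (zero_le_one), mul_zero]

lemma wstar_one {K : ℕ} (v : Fin K → ℝ) (hvs : ∑ j, v j = 1) : wstar K v 1 = 1 := by
  unfold wstar
  have h : ∀ i : Fin K, v i * min 1 (max 0 ((1:ℝ) * (K : ℝ) - (i.1 : ℝ))) = v i := by
    intro i
    have hi : (i.1 : ℝ) + 1 ≤ (K : ℝ) := by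
      exact_mod_cast Nat.succ_le_of_lt i.isLt
    have h1 : (1 : ℝ) ≤ (1 : ℝ) * (K : ℝ) - (i.1 : ℝ) := by linarith
    rw [max_eq_right (by linarith), min_eq_left h1, mul_one]
  rw [Finset.sum_congr rfl (fun i _ => h i), hvs]

/-- The level function `t ↦ w*(P{k : a k > t})`. -/
noncomputable def wowaLevel (K : ℕ) (v p : Fin K → ℝ) (a : Fin K → ℝ) (t : ℝ) : ℝ :=
  wstar K v (∑ k : Fin K, if t < a k then p k else 0)

lemma wowaLevel_anti {K : ℕ} (v p : Fin K → ℝ) (hv0 : ∀ j, 0 ≤ v j)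
    (hp0 : ∀ j, 0 ≤ p j) (a : Fin K → ℝ) : Antitone (wowaLevel K v p a) := by
  intro s t hst
  apply wstar_mono v hv0
  apply Finset.sum_le_sum
  intro k _
  by_cases h : t < a k
  · rw [if_pos h, if_pos (lt_of_le_of_lt hst h)]
  · rw [if_neg h]
    by_cases h2 : s < a k
    · rw [if_pos h2]; exact hp0 k
    · rw [if_neg h2]

/-- The increasing sequence of breakpoints `-M = f 0 ≤ a (σ (K-1)) ≤ ⋯ ≤ a (σ 0) ≤ f (K+1) = M`. -/
noncomputable def wowaF (K : ℕ) (a : Fin K → ℝ) (σ : Equiv.Perm (Fin K)) (M : ℝ) (j : ℕ) : ℝ :=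
  if h : 1 ≤ j ∧ j ≤ K then a (σ ⟨K - j, by omega⟩) else if j = 0 then -M else M

/-- Cumulative probabilities. -/
noncomputable def wowaCum (K : ℕ) (p : Fin K → ℝ) (σ : Equiv.Perm (Fin K)) (m : ℕ) : ℝ :=
  ∑ i : Fin K, if (i : ℕ) < m then p (σ i) else 0

lemma abel_aux (Φ B : ℕ → ℝ) (n : ℕ) :
    ∑ m ∈ range (n + 1), (B m - B (m + 1)) * Φ m
      = B 0 * Φ 0 - B (n + 1) * Φ n + ∑ m ∈ range n, (Φ (m + 1) - Φ m) * B (m + 1) := by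
  induction n with
  | zero => simp; ring
  | succ n ih => rw [Finset.sum_range_succ, ih, Finset.sum_range_succ]; ring

lemma wowaCum_zero {K : ℕ} (p : Fin K → ℝ) (σ : Equiv.Perm (Fin K)) :
    wowaCum K p σ 0 = 0 := by simp [wowaCum]

lemma wowaCum_K {K : ℕ} (p : Fin K → ℝ) (hps : ∑ j, p j = 1) (σ : Equiv.Perm (Fin K)) :
    wowaCum K p σ K = 1 := by
  unfold wowaCum
  have : ∀ i : Fin K, (if (i : ℕ) < K then p (σ i) else 0) = p (σ i) := fun i => if_pos i.isLt
  rw [Finset.sum_congr rfl (fun i _ => this i), Equiv.sum_comp σ p, hps]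

lemma wowaWeight_eq {K : ℕ} (v p : Fin K → ℝ) (σ : Equiv.Perm (Fin K)) (j : Fin K) :
    wowaWeight K v p σ j
      = wstar K v (wowaCum K p σ (j.1 + 1)) - wstar K v (wowaCum K p σ j.1) := by
  unfold wowaWeight wowaCum
  congr 2
  · have h : Finset.Iic j = Finset.univ.filter (fun i : Fin K => (i : ℕ) < j.1 + 1) := by
      ext i
      simp only [Finset.mem_Iic, Finset.mem_filter, Finset.mem_univ, true_and]
      rw [Fin.le_def]
      omega
    rw [h, Finset.sum_filter]
  · have h : Finset.Iio j = Finset.univ.filter (fun i : Fin K => (i : ℕ) < j.1) := by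
      ext i
      simp only [Finset.mem_Iio, Finset.mem_filter, Finset.mem_univ, true_and]
      rw [Fin.lt_def]
    rw [h, Finset.sum_filter]

/-- Representation of the WOWA value as a layer-cake integral. -/
lemma wowa_rep (K : ℕ) (v p : Fin K → ℝ)
    (hv0 : ∀ j, 0 ≤ v j) (hvs : ∑ j, v j = 1)
    (hp0 : ∀ j, 0 ≤ p j) (hps : ∑ j, p j = 1)
    (a : Fin K → ℝ) (σ : Equiv.Perm (Fin K))
    (hσ : ∀ i j : Fin K, i ≤ j → a (σ j) ≤ a (σ i))
    (hK : 0 < K) (M : ℝ) (hM : ∀ k, |a k| < M) :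
    wowaW K v p σ a = -M + ∫ t in (-M)..M, wowaLevel K v p a t := by
  set f := wowaF K a σ M with hf
  set Φ : ℕ → ℝ := fun m => wstar K v (wowaCum K p σ m) with hΦ
  have hfval : ∀ j, 1 ≤ j → j ≤ K → ∀ (h : K - j < K), f j = a (σ ⟨K - j, h⟩) := by
    intro j h1 h2 h
    simp only [hf, wowaF]
    rw [dif_pos ⟨h1, h2⟩]
  have hf0 : f 0 = -M := by simp only [hf, wowaF]; norm_num
  have hftop : ∀ j, K < j → f j = M := by
    intro j hj
    simp only [hf, wowaF]
    rw [dif_neg (by omega), if_neg (by omega)]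
  have haM : ∀ k, -M < a k ∧ a k < M := by
    intro k
    have := hM k
    constructor <;> [linarith [neg_abs_le (a k)]; linarith [le_abs_self (a k)]]
  -- monotonicity of the breakpoints
  have hfmono : ∀ j, f j ≤ f (j + 1) := by
    intro j
    rcases Nat.eq_zero_or_pos j with rfl | hj1
    · rw [hf0, hfval 1 le_rfl hK (by omega)]
      exact (haM _).1.le
    · rcases Nat.lt_or_ge K j with h | h
      · rw [hftop j h, hftop (j + 1) (by omega)]
      · rcases Nat.eq_or_lt_of_le h with rfl | h2
        · rw [hftop (j + 1) (by omega), hfval j hj1 le_rfl (by omega)]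
          exact (haM _).2.le
        · rw [hfval j hj1 h (by omega), hfval (j + 1) (by omega) (by omega) (by omega)]
          exact hσ _ _ (by simp [Fin.le_def]; omega)
  have hfmono' : ∀ i j, i ≤ j → f i ≤ f j := by
    intro i j hij
    induction j with
    | zero => simp_all
    | succ j ih =>
      rcases Nat.lt_or_ge i (j + 1) with h | h
      · exact le_trans (ih (by omega)) (hfmono j)
      · have : i = j + 1 := by omega
        subst this; rfl
  -- the value of the level function on each open interval
  have hpiece : ∀ j, j ≤ K → ∀ t, f j < t → t < f (j + 1) →
      wowaLevel K v p a t = Φ (K - j) := by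
    intro j hj t ht1 ht2
    unfold wowaLevel
    simp only [hΦ]
    congr 1
    unfold wowaCum
    rw [← Equiv.sum_comp σ (fun k => if t < a k then p k else 0)]
    apply Finset.sum_congr rfl
    intro i _
    congr 1
    apply propext
    constructor
    · intro hti
      by_contra hcon
      push_neg at hcon
      -- i.1 ≥ K - j, so a (σ i) ≤ f j < t
      have hj1 : 1 ≤ j := by
        by_contra h0
        have : j = 0 := by omega
        subst this
        exact absurd i.isLt (by omega)
      have hfj : f j = a (σ ⟨K - j, by omega⟩) := hfval j hj1 hj (by omega)
      have : a (σ i) ≤ a (σ ⟨K - j, by omega⟩) :=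
        hσ _ _ (by simp [Fin.le_def]; omega)
      rw [← hfj] at this
      linarith
    · intro hi
      -- i.1 < K - j, so f (j+1) ≤ a (σ i)
      have hjK : j < K := by omega
      have hfj1 : f (j + 1) = a (σ ⟨K - (j + 1), by omega⟩) :=
        hfval (j + 1) (by omega) (by omega) (by omega)
      have : a (σ ⟨K - (j + 1), by omega⟩) ≤ a (σ i) :=
        hσ _ _ (by simp [Fin.le_def]; omega)
      rw [← hfj1] at this
      linarith
  have hanti := wowaLevel_anti v p hv0 hp0 a
  -- each piece integrates to a constant
  have hint : ∀ j, j ≤ K →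
      ∫ t in f j..f (j + 1), wowaLevel K v p a t = (f (j + 1) - f j) * Φ (K - j) := by
    intro j hj
    have hle : f j ≤ f (j + 1) := hfmono j
    have : ((f (j + 1) - f j) * Φ (K - j)) = ∫ _ in f j..f (j + 1), Φ (K - j) := by
      rw [intervalIntegral.integral_const, smul_eq_mul]
    rw [this]
    apply intervalIntegral.integral_congr_ae
    rw [MeasureTheory.ae_iff]
    refine MeasureTheory.measure_mono_null ?_
      (MeasureTheory.measure_singleton (f (j + 1)))
    intro t ht
    simp only [Set.mem_setOf_eq, _root_.not_imp] at ht
    obtain ⟨htmem, htne⟩ := ht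
    rw [Set.uIoc_of_le hle] at htmem
    rcases lt_or_eq_of_le htmem.2 with h | h
    · exact absurd (hpiece j hj t htmem.1 h) htne
    · exact h
  -- sum the pieces
  have hadj : ∑ j ∈ range (K + 1), ∫ t in f j..f (j + 1), wowaLevel K v p a t
      = ∫ t in (f 0)..(f (K + 1)), wowaLevel K v p a t :=
    intervalIntegral.sum_integral_adjacent_intervals
      (fun k _ => hanti.intervalIntegrable)
  have hsum1 : ∫ t in (-M)..M, wowaLevel K v p a t
      = ∑ j ∈ range (K + 1), (f (j + 1) - f j) * Φ (K - j) := by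
    rw [← hf0, ← hftop (K + 1) (by omega), ← hadj]
    apply Finset.sum_congr rfl
    intro j hj
    exact hint j (by simp at hj; omega)
  -- reflect the sum and apply Abel summation
  set B : ℕ → ℝ := fun m => f (K + 1 - m) with hB
  have hsum2 : ∑ j ∈ range (K + 1), (f (j + 1) - f j) * Φ (K - j)
      = ∑ m ∈ range (K + 1), (B m - B (m + 1)) * Φ m := by
    rw [← Finset.sum_range_reflect (fun j => (f (j + 1) - f j) * Φ (K - j)) (K + 1)]
    apply Finset.sum_congr rfl
    intro m hm
    simp only [Nat.add_sub_cancel]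
    have hmK : m ≤ K := by simp at hm; omega
    have e1 : K - m + 1 = K + 1 - m := by omega
    have e2 : K - (K - m) = m := by omega
    have e3 : K + 1 - (m + 1) = K - m := by omega
    simp only [hB, e1, e2, e3]
  have habel := abel_aux Φ B K
  have hB0 : B 0 = M := by simp only [hB]; exact hftop (K + 1) (by omega)
  have hBK1 : B (K + 1) = -M := by
    simp only [hB, Nat.sub_self]; exact hf0
  have hΦ0 : Φ 0 = 0 := by simp only [hΦ]; rw [wowaCum_zero, wstar_zero]
  have hΦK : Φ K = 1 := by simp only [hΦ]; rw [wowaCum_K p hps, wstar_one v hvs]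
  -- identify the final sum with wowaW
  have hwowa : wowaW K v p σ a = ∑ m ∈ range K, (Φ (m + 1) - Φ m) * B (m + 1) := by
    unfold wowaW
    rw [← Fin.sum_univ_eq_sum_range (fun m => (Φ (m + 1) - Φ m) * B (m + 1)) K]
    apply Finset.sum_congr rfl
    intro j _
    have h1 : wowaWeight K v p σ j = Φ (j.1 + 1) - Φ j.1 := by
      simp only [hΦ]; exact wowaWeight_eq v p σ j
    have h2 : B (j.1 + 1) = a (σ j) := by
      have e : K + 1 - (j.1 + 1) = K - j.1 := by omega
      have hj2 : (⟨K - (K - j.1), by omega⟩ : Fin K) = j := by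
        apply Fin.ext
        show K - (K - j.1) = j.1
        omega
      simp only [hB]
      rw [e, hfval (K - j.1) (by omega) (by omega) (by omega), hj2]
    rw [h1, h2]
  rw [hsum1, hsum2, habel, hB0, hBK1, hΦ0, hΦK, hwowa]
  ring

/-- The WOWA operator is monotone. -/
theorem wowa_monotone (K : ℕ) (v p : Fin K → ℝ)
    (hv0 : ∀ j, 0 ≤ v j) (hvs : ∑ j, v j = 1)
    (hp0 : ∀ j, 0 ≤ p j) (hps : ∑ j, p j = 1)
    (a a' : Fin K → ℝ) (hle : ∀ j, a' j ≤ a j)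
    (σ σ' : Equiv.Perm (Fin K))
    (hσ : ∀ i j : Fin K, i ≤ j → a (σ j) ≤ a (σ i))
    (hσ' : ∀ i j : Fin K, i ≤ j → a' (σ' j) ≤ a' (σ' i)) :
    wowaW K v p σ' a' ≤ wowaW K v p σ a := by
  rcases Nat.eq_zero_or_pos K with rfl | hK
  · simp [wowaW]
  set M : ℝ := 1 + ∑ k : Fin K, (|a k| + |a' k|) with hM
  have hsumnonneg : (0 : ℝ) ≤ ∑ k : Fin K, (|a k| + |a' k|) :=
    Finset.sum_nonneg fun k _ => add_nonneg (abs_nonneg _) (abs_nonneg _)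
  have hMa : ∀ k, |a k| < M := by
    intro k
    have h1 : |a k| + |a' k| ≤ ∑ k : Fin K, (|a k| + |a' k|) :=
      Finset.single_le_sum (f := fun k => |a k| + |a' k|)
        (fun k _ => add_nonneg (abs_nonneg _) (abs_nonneg _)) (Finset.mem_univ k)
    have h2 : (0 : ℝ) ≤ |a' k| := abs_nonneg _
    rw [hM]; linarith
  have hMa' : ∀ k, |a' k| < M := by
    intro k
    have h1 : |a k| + |a' k| ≤ ∑ k : Fin K, (|a k| + |a' k|) :=
      Finset.single_le_sum (f := fun k => |a k| + |a' k|)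
        (fun k _ => add_nonneg (abs_nonneg _) (abs_nonneg _)) (Finset.mem_univ k)
    have h2 : (0 : ℝ) ≤ |a k| := abs_nonneg _
    rw [hM]; linarith
  rw [wowa_rep K v p hv0 hvs hp0 hps a σ hσ hK M hMa,
      wowa_rep K v p hv0 hvs hp0 hps a' σ' hσ' hK M hMa']
  apply add_le_add_right
  apply intervalIntegral.integral_mono_on (by rw [hM]; linarith)
    ((wowaLevel_anti v p hv0 hp0 a').intervalIntegrable)
    ((wowaLevel_anti v p hv0 hp0 a).intervalIntegrable)
  intro t _
  apply wstar_mono v hv0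
  apply Finset.sum_le_sum
  intro k _
  by_cases h : t < a' k
  · rw [if_pos h, if_pos (lt_of_lt_of_le h (hle k))]
  · rw [if_neg h]
    by_cases h2 : t < a k
    · rw [if_pos h2]; exact hp0 k
    · rw [if_neg h2]
end

section
/- (Swap step of Lemma 1) Let π be a permutation of {1,…,K} and suppose a_{π(i)} ≤ a_{π(i+1)} for some index i. Let π' be obtained from π by swapping positions i and i+1. Then f_{π'}(a) ≥ f_π(a), with equality when a_{π(i)} = a_{π(i+1)}. -/
open Finset

private lemma minmin (a b b' d c : ℝ) (h1 : a ≤ b) (h2 : a ≤ b') (h3 : b + b' = a + d) :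
    min a c + min d c ≤ min b c + min b' c := by
  have la := min_le_left a c
  have lc := min_le_right a c
  have ld := min_le_left d c
  have ldc := min_le_right d c
  rcases le_total b c with h | h <;> rcases le_total b' c with h' | h'
  · rw [min_eq_left h, min_eq_left h']; linarith
  · rw [min_eq_left h, min_eq_right h']; linarith
  · rw [min_eq_right h, min_eq_left h']; linarith
  · rw [min_eq_right h, min_eq_right h']; linarith

private lemma clamp_sum (c : ℝ) (hc : 0 ≤ c) (m : ℕ) :
    ∑ k ∈ range m, min 1 (max 0 (c - (k : ℝ))) = min c (m : ℝ) := by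
  induction m with
  | zero => simp [min_eq_right hc]
  | succ n ih =>
      rw [Finset.sum_range_succ, ih]
      push_cast
      rcases le_total c n with h | h
      · rw [max_eq_left (by linarith : c - (n:ℝ) ≤ 0),
          min_eq_right (by norm_num : (0:ℝ) ≤ 1),
          min_eq_left h, min_eq_left (by linarith : c ≤ (n:ℝ) + 1)]
        ring
      · rw [min_eq_right h, max_eq_right (by linarith : (0:ℝ) ≤ c - n)]
        rcases le_total c (n + 1) with h2 | h2
        · rw [min_eq_right (by linarith : c - (n:ℝ) ≤ 1), min_eq_left h2]; ring
        · rw [min_eq_left (by linarith : (1:ℝ) ≤ c - n), min_eq_right h2]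

private lemma abel_sum (u g : ℕ → ℝ) (n : ℕ) :
    ∑ i ∈ range n, u i * g i
      = u n * (∑ k ∈ range n, g k)
        + ∑ i ∈ range n, (u i - u (i + 1)) * ∑ k ∈ range (i + 1), g k := by
  induction n with
  | zero => simp
  | succ n ih =>
      rw [Finset.sum_range_succ, ih,
        Finset.sum_range_succ (fun i => (u i - u (i + 1)) * ∑ k ∈ range (i + 1), g k),
        Finset.sum_range_succ (fun k => g k)]
      ring

private lemma wstar_repr (K : ℕ) (v : Fin K → ℝ) (t : ℝ) (ht : 0 ≤ t) :
    wstar K v t = ∑ i ∈ range K,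
      ((if h : i < K then v ⟨i, h⟩ else 0) - (if h : i + 1 < K then v ⟨i + 1, h⟩ else 0))
        * min (t * K) ((i : ℝ) + 1) := by
  have h0 : wstar K v t = ∑ i ∈ range K,
      (if h : i < K then v ⟨i, h⟩ else 0) * min 1 (max 0 (t * K - (i : ℝ))) := by
    rw [wstar, ← Fin.sum_univ_eq_sum_range
      (fun n => (if h : n < K then v ⟨n, h⟩ else 0) * min 1 (max 0 (t * K - (n : ℝ)))) K]
    exact Finset.sum_congr rfl fun i _ => by rw [dif_pos i.2]
  rw [h0, abel_sum (fun n => if h : n < K then v ⟨n, h⟩ else 0)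
      (fun n => min 1 (max 0 (t * K - (n : ℝ)))) K]
  rw [dif_neg (lt_irrefl K)]
  rw [zero_mul, zero_add]
  refine Finset.sum_congr rfl fun i _ => ?_
  rw [clamp_sum (t * K) (by positivity) (i + 1)]
  push_cast
  ring_nf

private lemma wstar_four (K : ℕ) (v : Fin K → ℝ) (hv0 : ∀ j, 0 ≤ v j)
    (hvmono : ∀ i j : Fin K, i ≤ j → v j ≤ v i)
    (s x y : ℝ) (hs : 0 ≤ s) (hx : 0 ≤ x) (hy : 0 ≤ y) :
    wstar K v s + wstar K v (s + x + y) ≤ wstar K v (s + x) + wstar K v (s + y) := by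
  rw [wstar_repr K v s hs, wstar_repr K v (s + x + y) (by linarith),
    wstar_repr K v (s + x) (by linarith), wstar_repr K v (s + y) (by linarith),
    ← Finset.sum_add_distrib, ← Finset.sum_add_distrib]
  refine Finset.sum_le_sum fun i hi => ?_
  have hiK : i < K := Finset.mem_range.mp hi
  rw [← mul_add, ← mul_add]
  have hcoef : 0 ≤ (if h : i < K then v ⟨i, h⟩ else 0)
      - (if h : i + 1 < K then v ⟨i + 1, h⟩ else 0) := by
    rw [dif_pos hiK]
    by_cases h2 : i + 1 < K
    · rw [dif_pos h2]
      have := hvmono ⟨i, hiK⟩ ⟨i + 1, h2⟩ (by simp [Fin.le_def])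
      linarith
    · rw [dif_neg h2]; simpa using hv0 ⟨i, hiK⟩
  refine mul_le_mul_of_nonneg_left ?_ hcoef
  have hK0 : (0:ℝ) ≤ (K:ℝ) := Nat.cast_nonneg K
  exact minmin (s * K) ((s + x) * K) ((s + y) * K) ((s + x + y) * K) ((i:ℝ)+1)
    (by nlinarith) (by nlinarith) (by ring)

/-- swap step of Lemma 1: swapping two adjacent, wrongly
ordered positions does not decrease f_π, with equality for equal values. -/
theorem fpi_swap_step (K : ℕ) (v p : Fin K → ℝ)
    (hv0 : ∀ j, 0 ≤ v j) (hvs : ∑ j, v j = 1)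
    (hvmono : ∀ i j : Fin K, i ≤ j → v j ≤ v i)
    (hp0 : ∀ j, 0 < p j) (hps : ∑ j, p j = 1)
    (a : Fin K → ℝ) (π : Equiv.Perm (Fin K))
    (i : Fin K) (hi : i.1 + 1 < K)
    (hord : a (π i) ≤ a (π ⟨i.1 + 1, hi⟩)) :
    wowaW K v p π a ≤ wowaW K v p (π * Equiv.swap i ⟨i.1 + 1, hi⟩) a ∧
      (a (π i) = a (π ⟨i.1 + 1, hi⟩) →
        wowaW K v p π a = wowaW K v p (π * Equiv.swap i ⟨i.1 + 1, hi⟩) a) := by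
  set i' : Fin K := ⟨i.1 + 1, hi⟩ with hi'def
  have hii' : i'.1 = i.1 + 1 := rfl
  have hne : i ≠ i' := by
    intro h; have := congrArg Fin.val h; omega
  set σ : Equiv.Perm (Fin K) := π * Equiv.swap i i' with hσdef
  have hσi : σ i = π i' := by
    simp [hσdef, Equiv.Perm.mul_apply]
  have hσi' : σ i' = π i := by
    simp [hσdef, Equiv.Perm.mul_apply]
  have hσother : ∀ k, k ≠ i → k ≠ i' → σ k = π k := by
    intro k h1 h2
    simp [hσdef, Equiv.Perm.mul_apply, Equiv.swap_apply_of_ne_of_ne h1 h2]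
  -- invariance of initial segments under the swap
  have hIio_inv : ∀ j : Fin K, j ≠ i' → ∀ k, k ∈ Iio j ↔ Equiv.swap i i' k ∈ Iio j := by
    intro j hj k
    have hjv : j.1 ≠ i.1 + 1 := fun h => hj (Fin.ext h)
    rcases eq_or_ne k i with rfl | h1
    · rw [Equiv.swap_apply_left]
      simp only [Finset.mem_Iio, Fin.lt_def, hii']
      omega
    rcases eq_or_ne k i' with rfl | h2
    · rw [Equiv.swap_apply_right]
      simp only [Finset.mem_Iio, Fin.lt_def, hii']
      omega
    · rw [Equiv.swap_apply_of_ne_of_ne h1 h2]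
  have hIic_inv : ∀ j : Fin K, j ≠ i → ∀ k, k ∈ Iic j ↔ Equiv.swap i i' k ∈ Iic j := by
    intro j hj k
    have hjv : j.1 ≠ i.1 := fun h => hj (Fin.ext h)
    rcases eq_or_ne k i with rfl | h1
    · rw [Equiv.swap_apply_left]
      simp only [Finset.mem_Iic, Fin.le_def, hii']
      omega
    rcases eq_or_ne k i' with rfl | h2
    · rw [Equiv.swap_apply_right]
      simp only [Finset.mem_Iic, Fin.le_def, hii']
      omega
    · rw [Equiv.swap_apply_of_ne_of_ne h1 h2]
  have hsum_Iio : ∀ j : Fin K, j ≠ i' →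
      ∑ k ∈ Iio j, p (σ k) = ∑ k ∈ Iio j, p (π k) := by
    intro j hj
    refine Finset.sum_equiv (Equiv.swap i i') (fun k => hIio_inv j hj k) ?_
    intro k _
    simp [hσdef, Equiv.Perm.mul_apply]
  have hsum_Iic : ∀ j : Fin K, j ≠ i →
      ∑ k ∈ Iic j, p (σ k) = ∑ k ∈ Iic j, p (π k) := by
    intro j hj
    refine Finset.sum_equiv (Equiv.swap i i') (fun k => hIic_inv j hj k) ?_
    intro k _
    simp [hσdef, Equiv.Perm.mul_apply]
  have hw_other : ∀ j : Fin K, j ≠ i → j ≠ i' →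
      wowaWeight K v p σ j = wowaWeight K v p π j := by
    intro j h1 h2
    unfold wowaWeight
    rw [hsum_Iio j h2, hsum_Iic j h1]
  -- notations
  set S : ℝ := ∑ k ∈ Iio i, p (π k) with hSdef
  set x : ℝ := p (π i) with hxdef
  set y : ℝ := p (π i') with hydef
  have hIio' : (Iio i' : Finset (Fin K)) = Iic i := by
    ext k
    simp only [Finset.mem_Iio, Finset.mem_Iic, Fin.lt_def, Fin.le_def, hii']
    omega
  have hIic_eq : (Iic i : Finset (Fin K)) = insert i (Iio i) := by
    ext k
    simp only [Finset.mem_Iic, Finset.mem_insert, Finset.mem_Iio, Fin.lt_def, Fin.le_def,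
      Fin.ext_iff]
    omega
  have hIic'_eq : (Iic i' : Finset (Fin K)) = insert i' (Iic i) := by
    ext k
    simp only [Finset.mem_Iic, Finset.mem_insert, Fin.le_def, hii', Fin.ext_iff]
    omega
  have hnotmem : i ∉ (Iio i : Finset (Fin K)) := by simp
  have hnotmem' : i' ∉ (Iic i : Finset (Fin K)) := by
    simp only [Finset.mem_Iic, Fin.le_def, hii']
    omega
  -- sums for π
  have sπ1 : ∑ k ∈ Iic i, p (π k) = S + x := by
    rw [hIic_eq, Finset.sum_insert hnotmem]; ring
  have sπ2 : ∑ k ∈ Iio i', p (π k) = S + x := by rw [hIio']; exact sπ1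
  have sπ3 : ∑ k ∈ Iic i', p (π k) = S + x + y := by
    rw [hIic'_eq, Finset.sum_insert hnotmem', sπ1]; ring
  -- sums for σ
  have sσ0 : ∑ k ∈ Iio i, p (σ k) = S := by
    rw [hsum_Iio i hne]
  have sσ1 : ∑ k ∈ Iic i, p (σ k) = S + y := by
    rw [hIic_eq, Finset.sum_insert hnotmem, hσi]
    have : ∑ k ∈ Iio i, p (σ k) = S := sσ0
    rw [this]; ring
  have sσ2 : ∑ k ∈ Iio i', p (σ k) = S + y := by rw [hIio']; exact sσ1
  have sσ3 : ∑ k ∈ Iic i', p (σ k) = S + x + y := by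
    rw [hIic'_eq, Finset.sum_insert hnotmem', hσi', sσ1]; ring
  -- weights at i and i'
  have wπi : wowaWeight K v p π i = wstar K v (S + x) - wstar K v S := by
    unfold wowaWeight; rw [sπ1]
  have wπi' : wowaWeight K v p π i' = wstar K v (S + x + y) - wstar K v (S + x) := by
    unfold wowaWeight; rw [sπ3, sπ2]
  have wσi : wowaWeight K v p σ i = wstar K v (S + y) - wstar K v S := by
    unfold wowaWeight; rw [sσ1, sσ0]
  have wσi' : wowaWeight K v p σ i' = wstar K v (S + x + y) - wstar K v (S + y) := by
    unfold wowaWeight; rw [sσ3, sσ2]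
  -- main difference identity
  have hdiff : wowaW K v p σ a - wowaW K v p π a
      = (a (π i') - a (π i)) *
        (wstar K v (S + x) + wstar K v (S + y) - wstar K v S - wstar K v (S + x + y)) := by
    unfold wowaW
    rw [← Finset.sum_sub_distrib]
    rw [← Finset.sum_subset (Finset.subset_univ ({i, i'} : Finset (Fin K)))
      (fun j _ hj => by
        simp only [Finset.mem_insert, Finset.mem_singleton, not_or] at hj
        rw [hw_other j hj.1 hj.2, hσother j hj.1 hj.2, sub_self])]
    rw [Finset.sum_pair hne, hσi, hσi', wπi, wπi', wσi, wσi']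
    ring
  have hS0 : 0 ≤ S := Finset.sum_nonneg fun k _ => (hp0 _).le
  have hD : 0 ≤ wstar K v (S + x) + wstar K v (S + y)
      - wstar K v S - wstar K v (S + x + y) := by
    have := wstar_four K v hv0 hvmono S x y hS0 (hp0 _).le (hp0 _).le
    linarith
  constructor
  · have := mul_nonneg (sub_nonneg.mpr hord) hD
    linarith
  · intro h
    have hz : a (π i') - a (π i) = 0 := by rw [h]; ring
    rw [hz, zero_mul] at hdiff
    linarith
end

section
/- (Lemma 2) For any nonnegative vector a ∈ ℝ^K, wowa_{(v,p)}(a) ≤ v_1 · K · Σ_{j=1}^K p_j a_j, provided v_1 ≥ v_2 ≥ … ≥ v_K. -/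
open Finset

lemma gsum (K : ℕ) (u : ℝ) :
    ∑ i : Fin K, min 1 (max 0 (u - (i.1 : ℝ))) = min (K : ℝ) (max 0 u) := by
  induction K with
  | zero => simp
  | succ n ih =>
    rw [Fin.sum_univ_castSucc]
    simp only [Fin.coe_castSucc, Fin.val_last, ih, Nat.cast_succ]
    rcases le_total u 0 with h | h
    · rw [max_eq_left h, min_eq_right (by positivity), max_eq_left (by linarith),
        min_eq_right (by positivity), min_eq_right (by linarith)]
      ring
    · rw [max_eq_right h]
      rcases le_total u n with h1 | h1
      · rw [min_eq_right h1, max_eq_left (by linarith), min_eq_right (by positivity),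
          min_eq_right (by linarith)]
        ring
      · rw [min_eq_left h1, max_eq_right (by linarith)]
        rcases le_total u (n + 1) with h2 | h2
        · rw [min_eq_right (by linarith), min_eq_right h2]; ring
        · rw [min_eq_left (by linarith), min_eq_left h2]


lemma minmax_lip (c : ℝ) {x y : ℝ} (h : x ≤ y) : min c (max 0 y) - min c (max 0 x) ≤ y - x := by
  have hm : max 0 x ≤ max 0 y := max_le_max le_rfl h
  have h1 : max 0 y - max 0 x ≤ y - x := by
    rcases le_total 0 x with hx | hx
    · rw [max_eq_right hx, max_eq_right (hx.trans h)]
    · rw [max_eq_left hx]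
      rcases le_total 0 y with hy | hy
      · rw [max_eq_right hy]; linarith
      · rw [max_eq_left hy]; linarith
  rcases le_total c (max 0 x) with h2 | h2
  · rw [min_eq_left h2, min_eq_left (h2.trans hm)]; linarith
  · rw [min_eq_right h2]
    rcases le_total c (max 0 y) with h3 | h3
    · rw [min_eq_left h3]; linarith
    · rw [min_eq_right h3]; linarith

lemma wstar_lip (K : ℕ) (hK : 0 < K) (v : Fin K → ℝ)
    (hv0 : ∀ j, 0 ≤ v j) (hvmono : ∀ i j : Fin K, i ≤ j → v j ≤ v i)
    (s t : ℝ) (hst : s ≤ t) :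
    wstar K v t - wstar K v s ≤ v ⟨0, hK⟩ * (K : ℝ) * (t - s) := by
  have hv0' : ∀ i : Fin K, v i ≤ v ⟨0, hK⟩ := fun i =>
    hvmono ⟨0, hK⟩ i (Fin.mk_le_of_le_val (Nat.zero_le _))
  have hmono : ∀ i : Fin K,
      min 1 (max 0 (s * K - (i.1 : ℝ))) ≤ min 1 (max 0 (t * K - (i.1 : ℝ))) := by
    intro i
    have : s * K ≤ t * K := by
      apply mul_le_mul_of_nonneg_right hst (by positivity)
    exact min_le_min le_rfl (max_le_max le_rfl (by linarith))
  unfold wstar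
  rw [← Finset.sum_sub_distrib]
  have h1 : ∀ i : Fin K,
      v i * min 1 (max 0 (t * K - (i.1 : ℝ))) - v i * min 1 (max 0 (s * K - (i.1 : ℝ)))
      ≤ v ⟨0, hK⟩ * (min 1 (max 0 (t * K - (i.1 : ℝ))) - min 1 (max 0 (s * K - (i.1 : ℝ)))) := by
    intro i
    rw [← mul_sub]
    exact mul_le_mul_of_nonneg_right (hv0' i) (by linarith [hmono i])
  calc _ ≤ ∑ i : Fin K, v ⟨0, hK⟩ *
        (min 1 (max 0 (t * K - (i.1 : ℝ))) - min 1 (max 0 (s * K - (i.1 : ℝ)))) :=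
        Finset.sum_le_sum fun i _ => h1 i
    _ = v ⟨0, hK⟩ * (min (K : ℝ) (max 0 (t * K)) - min (K : ℝ) (max 0 (s * K))) := by
        rw [← Finset.mul_sum, Finset.sum_sub_distrib, gsum, gsum]
    _ ≤ v ⟨0, hK⟩ * (K : ℝ) * (t - s) := by
        rw [mul_assoc]
        apply mul_le_mul_of_nonneg_left _ (hv0 _)
        have h2 := minmax_lip (K : ℝ) (mul_le_mul_of_nonneg_right hst (Nat.cast_nonneg K))
        nlinarith

/-- Lemma 2: wowa(a) ≤ v₁ K ∑ p_j a_j for nonneg a. -/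
theorem wowa_le_v1K_mean (K : ℕ) (hK : 0 < K) (v p : Fin K → ℝ)
    (hv0 : ∀ j, 0 ≤ v j) (hvs : ∑ j, v j = 1)
    (hvmono : ∀ i j : Fin K, i ≤ j → v j ≤ v i)
    (hp0 : ∀ j, 0 ≤ p j) (hps : ∑ j, p j = 1)
    (a : Fin K → ℝ) (ha : ∀ j, 0 ≤ a j)
    (σ : Equiv.Perm (Fin K))
    (hσ : ∀ i j : Fin K, i ≤ j → a (σ j) ≤ a (σ i)) :
    wowaW K v p σ a ≤ v ⟨0, hK⟩ * (K : ℝ) * ∑ j, p j * a j := by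
  have key : ∀ j : Fin K, wowaWeight K v p σ j ≤ v ⟨0, hK⟩ * (K : ℝ) * p (σ j) := by
    intro j
    have hnotmem : j ∉ Finset.Iio j := by simp
    have hsplit : ∑ i ∈ Finset.Iic j, p (σ i)
        = p (σ j) + ∑ i ∈ Finset.Iio j, p (σ i) := by
      rw [← Finset.Iio_insert, Finset.sum_insert hnotmem]
    have hle : ∑ i ∈ Finset.Iio j, p (σ i) ≤ ∑ i ∈ Finset.Iic j, p (σ i) := by
      rw [hsplit]; linarith [hp0 (σ j)]
    have h := wstar_lip K hK v hv0 hvmono _ _ hle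
    unfold wowaWeight
    calc wstar K v (∑ i ∈ Finset.Iic j, p (σ i)) - wstar K v (∑ i ∈ Finset.Iio j, p (σ i))
        ≤ v ⟨0, hK⟩ * (K : ℝ) *
          ((∑ i ∈ Finset.Iic j, p (σ i)) - ∑ i ∈ Finset.Iio j, p (σ i)) := h
      _ = v ⟨0, hK⟩ * (K : ℝ) * p (σ j) := by rw [hsplit]; ring
  unfold wowaW
  calc ∑ j : Fin K, wowaWeight K v p σ j * a (σ j)
      ≤ ∑ j : Fin K, v ⟨0, hK⟩ * (K : ℝ) * p (σ j) * a (σ j) :=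
        Finset.sum_le_sum fun j _ => mul_le_mul_of_nonneg_right (key j) (ha _)
    _ = v ⟨0, hK⟩ * (K : ℝ) * ∑ j : Fin K, p (σ j) * a (σ j) := by
        rw [Finset.mul_sum]; congr 1; ext j; ring
    _ = v ⟨0, hK⟩ * (K : ℝ) * ∑ j, p j * a j := by
        rw [Equiv.sum_comp σ (fun j => p j * a j)]
end

section
/- (Approximation with γ-approximate subroutine) Under the hypotheses of Theorem 1, if X̂ is instead only a γ-approximate minimizer of the aggregated costs, i.e., Σ_{e_i∈X̂} ĉ_i ≤ γ·min_{X∈Φ} Σ_{e_i∈X} ĉ_i for some γ ≥ 1, then WOWA(X̂) ≤ γ·K·v_1·WOWA(X) for every X ∈ Φ. -/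
open Finset

namespace WA

noncomputable def clamp (x : ℝ) : ℝ := min 1 (max 0 x)

lemma clamp_nonneg (x : ℝ) : 0 ≤ clamp x := le_min zero_le_one (le_max_left _ _)
lemma clamp_le_one (x : ℝ) : clamp x ≤ 1 := min_le_left _ _
lemma clamp_mono {x y : ℝ} (h : x ≤ y) : clamp x ≤ clamp y :=
  min_le_min le_rfl (max_le_max le_rfl h)
lemma clamp_of_nonpos {x : ℝ} (h : x ≤ 0) : clamp x = 0 := by
  unfold clamp; rw [max_eq_left h, min_eq_right zero_le_one]
lemma clamp_of_one_le {x : ℝ} (h : 1 ≤ x) : clamp x = 1 := by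
  unfold clamp; rw [max_eq_right (zero_le_one.trans h), min_eq_left h]
lemma clamp_le_self {x : ℝ} (h : 0 ≤ x) : clamp x ≤ x := by
  unfold clamp; rw [max_eq_right h]; exact min_le_right _ _
lemma self_le_clamp {x : ℝ} (h : x ≤ 1) : x ≤ clamp x :=
  le_min h (le_max_right _ _)
lemma clamp_of_mem {x : ℝ} (h0 : 0 ≤ x) (h1 : x ≤ 1) : clamp x = x :=
  le_antisymm (clamp_le_self h0) (self_le_clamp h1)
lemma clamp_one_sub (x : ℝ) : 1 - clamp x = clamp (1 - x) := by
  rcases le_total x 0 with h | h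
  · rw [clamp_of_nonpos h, clamp_of_one_le (by linarith)]; ring
  · rcases le_total x 1 with h1 | h1
    · rw [clamp_of_mem h h1, clamp_of_mem (by linarith) (by linarith)]
    · rw [clamp_of_one_le h1, clamp_of_nonpos (by linarith)]; ring

lemma sum_clamp : ∀ (m : ℕ) (u : ℝ), 0 ≤ u → u ≤ m → ∑ i ∈ range m, clamp (u - i) = u := by
  intro m
  induction m with
  | zero => intro u h0 h1; simp only [Nat.cast_zero] at h1; simp [le_antisymm h1 h0]
  | succ m ih =>
    intro u h0 h1
    rw [sum_range_succ]
    rcases le_or_gt u m with h | h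
    · rw [ih u h0 h, clamp_of_nonpos (by linarith)]; ring
    · have h2 : ∀ i ∈ range m, clamp (u - i) = 1 := by
        intro i hi; rw [mem_range] at hi
        have : (i : ℝ) + 1 ≤ m := by exact_mod_cast Nat.succ_le_of_lt hi
        exact clamp_of_one_le (by linarith)
      rw [sum_congr rfl h2, clamp_of_mem (by linarith)
        (by push_cast at h1 ⊢; linarith)]
      simp only [sum_const, card_range, nsmul_eq_mul, mul_one]
      ring

lemma sum_clamp_rev : ∀ (m : ℕ) (u : ℝ), 0 ≤ u → u ≤ m →
    ∑ i ∈ range m, clamp ((i : ℝ) + 1 - u) = m - u := by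
  intro m
  induction m with
  | zero => intro u h0 h1; simp only [Nat.cast_zero] at h1; simp [le_antisymm h1 h0]
  | succ m ih =>
    intro u h0 h1
    rw [sum_range_succ]
    rcases le_or_gt u m with h | h
    · rw [ih u h0 h, clamp_of_one_le (by linarith)]; push_cast; ring
    · have h2 : ∀ i ∈ range m, clamp ((i : ℝ) + 1 - u) = 0 := by
        intro i hi; rw [mem_range] at hi
        have : (i : ℝ) + 1 ≤ m := by exact_mod_cast Nat.succ_le_of_lt hi
        exact clamp_of_nonpos (by linarith)
      rw [sum_congr rfl h2, Finset.sum_const_zero, clamp_of_mem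
        (by push_cast at h1 ⊢; linarith) (by linarith)]
      push_cast; ring

noncomputable def vd (K : ℕ) (v : Fin K → ℝ) (m : ℕ) : ℝ := if h : m < K then v ⟨m, h⟩ else 0

lemma vd_nonneg {K v} (hv0 : ∀ i, 0 ≤ v i) (m : ℕ) : 0 ≤ vd K v m := by
  unfold vd; split
  · exact hv0 _
  · exact le_rfl

lemma fin_sum_eq {K : ℕ} (f : Fin K → ℝ) :
    ∑ i : Fin K, f i = ∑ m ∈ range K, (if h : m < K then f ⟨m, h⟩ else 0) := by
  rw [← Fin.sum_univ_eq_sum_range (fun m => if h : m < K then f ⟨m, h⟩ else 0) K]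
  exact sum_congr rfl fun i _ => by simp [i.isLt]

lemma wstar_range {K : ℕ} (v : Fin K → ℝ) (t : ℝ) :
    wstar K v t = ∑ m ∈ range K, vd K v m * clamp (t * K - m) := by
  show (∑ i : Fin K, v i * min 1 (max 0 (t * K - (i.1 : ℝ)))) = _
  rw [fin_sum_eq (fun i : Fin K => v i * min 1 (max 0 (t * K - (i.1 : ℝ))))]
  refine sum_congr rfl fun m hm => ?_
  rw [mem_range] at hm
  rw [dif_pos hm, vd, dif_pos hm]
  rfl

lemma wstar_zero {K : ℕ} (v : Fin K → ℝ) : wstar K v 0 = 0 := by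
  rw [wstar_range]
  refine Finset.sum_eq_zero fun m _ => ?_
  rw [clamp_of_nonpos (by simp [Nat.cast_nonneg])]
  ring

lemma wstar_one {K : ℕ} (v : Fin K → ℝ) (hvs : ∑ j, v j = 1) : wstar K v 1 = 1 := by
  have h : ∀ i : Fin K, v i * min 1 (max 0 ((1:ℝ) * K - (i.1:ℝ))) = v i := by
    intro i
    have hi : (i.1 : ℝ) + 1 ≤ K := by exact_mod_cast i.isLt
    rw [show min 1 (max 0 ((1:ℝ)*K - (i.1:ℝ))) = clamp ((1:ℝ)*K - (i.1:ℝ)) from rfl,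
      clamp_of_one_le (by linarith)]
    ring
  unfold wstar
  rw [sum_congr rfl (fun i _ => h i), hvs]

lemma wstar_le_L {K : ℕ} {v : Fin K → ℝ} (hv0 : ∀ i, 0 ≤ v i)
    (hvmono : ∀ i j : Fin K, i ≤ j → v j ≤ v i)
    {t : ℝ} (ht0 : 0 ≤ t) (ht1 : t ≤ 1) (j : Fin K) :
    wstar K v t ≤ (∑ m ∈ range j.1, vd K v m) + v j * (t * K - j.1) := by
  have hjK : j.1 ≤ K := j.isLt.le
  have hKr : (0:ℝ) ≤ K := Nat.cast_nonneg K
  have htK : t * K ≤ K := by nlinarith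
  have htK0 : 0 ≤ t * K := by positivity
  rw [wstar_range]
  rcases le_or_gt (j.1 : ℝ) (t * K) with hcase | hcase
  · -- t*K ≥ j
    rw [← sum_range_add_sum_Ico _ hjK]
    have h1 : ∑ m ∈ range j.1, vd K v m * clamp (t * K - m) ≤ ∑ m ∈ range j.1, vd K v m :=
      sum_le_sum fun m _ => by
        nlinarith [vd_nonneg hv0 m, clamp_le_one (t * K - (m:ℝ)), clamp_nonneg (t * K - (m:ℝ))]
    have h2 : ∑ m ∈ Ico j.1 K, vd K v m * clamp (t * K - m) ≤ v j * (t * K - j.1) := by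
      have step1 : ∑ m ∈ Ico j.1 K, vd K v m * clamp (t * K - m)
          ≤ ∑ m ∈ Ico j.1 K, v j * clamp (t * K - m) := by
        refine sum_le_sum fun m hm => ?_
        rw [mem_Ico] at hm
        have hmK : m < K := hm.2
        have : vd K v m = v ⟨m, hmK⟩ := dif_pos hmK
        rw [this]
        exact mul_le_mul_of_nonneg_right (hvmono j ⟨m, hmK⟩ hm.1) (clamp_nonneg _)
      have step2 : ∑ m ∈ Ico j.1 K, clamp (t * K - m) = t * K - j.1 := by
        rw [sum_Ico_eq_sum_range]
        have : ∀ i ∈ range (K - j.1), clamp (t * K - (↑(j.1 + i))) = clamp ((t * K - j.1) - i) := by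
          intro i _; congr 1; push_cast; ring
        rw [sum_congr rfl this]
        refine sum_clamp (K - j.1) (t * K - j.1) (by linarith) ?_
        rw [Nat.cast_sub hjK]; linarith
      calc ∑ m ∈ Ico j.1 K, vd K v m * clamp (t * K - m)
          ≤ ∑ m ∈ Ico j.1 K, v j * clamp (t * K - m) := step1
        _ = v j * (t * K - j.1) := by rw [← mul_sum, step2]
    linarith
  · -- t*K < j
    have hzero : ∀ m ∈ range K, m ∉ range j.1 → vd K v m * clamp (t * K - m) = 0 := by
      intro m _ hm
      rw [mem_range, not_lt] at hm
      have : (j.1 : ℝ) ≤ m := by exact_mod_cast hm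
      rw [clamp_of_nonpos (by linarith)]; ring
    rw [← sum_subset (by intro m hm; rw [mem_range] at *; omega : range j.1 ⊆ range K) hzero]
    have key : v j * ((j.1:ℝ) - t * K) ≤ ∑ m ∈ range j.1, vd K v m * (1 - clamp (t * K - m)) := by
      have e1 : ∀ m ∈ range j.1, v j * clamp ((m:ℝ) + 1 - t * K)
          ≤ vd K v m * (1 - clamp (t * K - m)) := by
        intro m hm
        rw [mem_range] at hm
        have hmK : m < K := lt_of_lt_of_le hm hjK
        have hvd : vd K v m = v ⟨m, hmK⟩ := dif_pos hmK
        have hmono : v j ≤ v ⟨m, hmK⟩ := hvmono ⟨m, hmK⟩ j (by exact hm.le)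
        rw [clamp_one_sub, hvd]
        have : (1:ℝ) - (t * K - m) = (m:ℝ) + 1 - t * K := by ring
        rw [this]
        exact mul_le_mul_of_nonneg_right hmono (clamp_nonneg _)
      calc v j * ((j.1:ℝ) - t * K)
          = v j * ∑ m ∈ range j.1, clamp ((m:ℝ) + 1 - t * K) := by
            rw [sum_clamp_rev j.1 (t*K) htK0 hcase.le]
        _ = ∑ m ∈ range j.1, v j * clamp ((m:ℝ) + 1 - t * K) := mul_sum _ _ _
        _ ≤ _ := sum_le_sum e1
    have expand : ∑ m ∈ range j.1, vd K v m * (1 - clamp (t * K - m))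
        = ∑ m ∈ range j.1, vd K v m - ∑ m ∈ range j.1, vd K v m * clamp (t * K - m) := by
      rw [← sum_sub_distrib]; exact sum_congr rfl fun m _ => by ring
    rw [expand] at key
    linarith

lemma L_le_wstar {K : ℕ} {v : Fin K → ℝ} (hv0 : ∀ i, 0 ≤ v i) (hK : 0 < K)
    {t : ℝ} (ht0 : 0 ≤ t) (ht1 : t ≤ 1) :
    ∃ j : Fin K, (∑ m ∈ range j.1, vd K v m) + v j * (t * K - j.1) ≤ wstar K v t := by
  have hKr : (0:ℝ) < K := by exact_mod_cast hK
  have htK : t * K ≤ K := by nlinarith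
  have htK0 : 0 ≤ t * K := by positivity
  set jn : ℕ := min ⌊t * K⌋₊ (K - 1) with hjn
  have hjnK : jn < K := by omega
  refine ⟨⟨jn, hjnK⟩, ?_⟩
  have hj1 : (jn : ℝ) ≤ t * K := by
    have : (jn : ℝ) ≤ ⌊t * K⌋₊ := by exact_mod_cast Nat.min_le_left _ _
    exact this.trans (Nat.floor_le htK0)
  have hj2 : t * K ≤ (jn : ℝ) + 1 := by
    rcases le_or_gt ⌊t * K⌋₊ (K - 1) with h | h
    · have : jn = ⌊t * K⌋₊ := by omega
      rw [this]
      exact (Nat.lt_floor_add_one (t * K)).le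
    · have hj : jn = K - 1 := by omega
      have : ((K - 1 : ℕ) : ℝ) + 1 = K := by
        rw [Nat.cast_sub hK]; push_cast; ring
      rw [hj, this]; exact htK
  rw [wstar_range]
  rw [← sum_range_add_sum_Ico _ (Nat.succ_le_of_lt hjnK), sum_range_succ]
  have h3 : ∑ m ∈ Ico (jn + 1) K, vd K v m * clamp (t * K - m) ≥ 0 :=
    sum_nonneg fun m _ => mul_nonneg (vd_nonneg hv0 m) (clamp_nonneg _)
  have h1 : ∀ m ∈ range jn, vd K v m * clamp (t * K - m) = vd K v m := by
    intro m hm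
    rw [mem_range] at hm
    have : (m : ℝ) + 1 ≤ jn := by exact_mod_cast Nat.succ_le_of_lt hm
    rw [clamp_of_one_le (by linarith)]; ring
  have h2 : v ⟨jn, hjnK⟩ * (t * K - jn) ≤ vd K v jn * clamp (t * K - jn) := by
    have hvd : vd K v jn = v ⟨jn, hjnK⟩ := dif_pos hjnK
    rw [hvd]
    exact mul_le_mul_of_nonneg_left (self_le_clamp (by linarith)) (hv0 _)
  rw [sum_congr rfl h1]
  exact le_add_of_le_of_nonneg (by linarith) h3

lemma wstar_combo {K : ℕ} {v : Fin K → ℝ} (hv0 : ∀ i, 0 ≤ v i)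
    (hvmono : ∀ i j : Fin K, i ≤ j → v j ≤ v i) (hK : 0 < K)
    {A s B : ℝ} (hA : 0 ≤ A) (hB : B ≤ 1) (h1 : A ≤ s) (h2 : s ≤ B) :
    (B - s) * wstar K v A + (s - A) * wstar K v B ≤ (B - A) * wstar K v s := by
  obtain ⟨j, hj⟩ := L_le_wstar hv0 hK (by linarith : (0:ℝ) ≤ s) (by linarith : s ≤ 1)
  have hLA := wstar_le_L hv0 hvmono hA (by linarith : A ≤ 1) j
  have hLB := wstar_le_L hv0 hvmono (by linarith : (0:ℝ) ≤ B) hB j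
  set C := ∑ m ∈ range j.1, vd K v m with hC
  have key : (B - s) * (C + v j * (A * K - j.1)) + (s - A) * (C + v j * (B * K - j.1))
      = (B - A) * (C + v j * (s * K - j.1)) := by ring
  linarith [key, mul_le_mul_of_nonneg_left hLA (by linarith : (0:ℝ) ≤ B - s),
    mul_le_mul_of_nonneg_left hLB (by linarith : (0:ℝ) ≤ s - A),
    mul_le_mul_of_nonneg_left hj (by linarith : (0:ℝ) ≤ B - A)]

lemma wstar_fourpoint {K : ℕ} {v : Fin K → ℝ} (hv0 : ∀ i, 0 ≤ v i)
    (hvmono : ∀ i j : Fin K, i ≤ j → v j ≤ v i) (hK : 0 < K)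
    {A s s' B : ℝ} (hA : 0 ≤ A) (hB : B ≤ 1) (h1 : A ≤ s) (h2 : s ≤ B)
    (h1' : A ≤ s') (h2' : s' ≤ B) (hsum : s + s' = A + B) :
    wstar K v A + wstar K v B ≤ wstar K v s + wstar K v s' := by
  rcases eq_or_lt_of_le (h1.trans h2 : A ≤ B) with heq | hlt
  · have hsA : s = A := le_antisymm (heq ▸ h2) h1
    have hsA' : s' = A := le_antisymm (heq ▸ h2') h1'
    rw [hsA, hsA', ← heq]
  · have hs' : s' = A + B - s := by linarith
    subst hs'
    have c1 := wstar_combo hv0 hvmono hK hA hB h1 h2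
    have c2 := wstar_combo hv0 hvmono hK hA hB h1' h2'
    have H : (B - A) * (wstar K v A + wstar K v B)
        ≤ (B - A) * (wstar K v s + wstar K v (A + B - s)) := by linarith
    exact le_of_mul_le_mul_left H (by linarith)

lemma wstar_ge_id {K : ℕ} {v : Fin K → ℝ} (hv0 : ∀ i, 0 ≤ v i)
    (hvmono : ∀ i j : Fin K, i ≤ j → v j ≤ v i) (hK : 0 < K) (hvs : ∑ j, v j = 1)
    {t : ℝ} (ht0 : 0 ≤ t) (ht1 : t ≤ 1) : t ≤ wstar K v t := by
  have := wstar_combo hv0 hvmono hK (le_refl (0:ℝ)) (le_refl (1:ℝ)) ht0 ht1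
  rw [wstar_zero, wstar_one v hvs] at this
  linarith

lemma wstar_lipschitz {K : ℕ} {v : Fin K → ℝ} (hv0 : ∀ i, 0 ≤ v i)
    (hvmono : ∀ i j : Fin K, i ≤ j → v j ≤ v i) (hK : 0 < K)
    {s t : ℝ} (h0 : 0 ≤ t) (hts : t ≤ s) (hs1 : s ≤ 1) :
    wstar K v s - wstar K v t ≤ v ⟨0, hK⟩ * K * (s - t) := by
  have hKr : (0:ℝ) < K := by exact_mod_cast hK
  rw [wstar_range, wstar_range, ← sum_sub_distrib]
  have e1 : ∀ m ∈ range K, vd K v m * clamp (s * K - m) - vd K v m * clamp (t * K - m)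
      ≤ v ⟨0, hK⟩ * (clamp (s * K - m) - clamp (t * K - m)) := by
    intro m hm
    rw [mem_range] at hm
    have hvd : vd K v m = v ⟨m, hm⟩ := dif_pos hm
    have hmono : v ⟨m, hm⟩ ≤ v ⟨0, hK⟩ := hvmono ⟨0, hK⟩ ⟨m, hm⟩ (by simp)
    have hcl : 0 ≤ clamp (s * K - m) - clamp (t * K - m) := by
      have := clamp_mono (by nlinarith : t * K - (m:ℝ) ≤ s * K - m)
      linarith
    rw [hvd, ← mul_sub]
    exact mul_le_mul_of_nonneg_right hmono hcl
  calc ∑ m ∈ range K, (vd K v m * clamp (s * K - m) - vd K v m * clamp (t * K - m))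
      ≤ ∑ m ∈ range K, v ⟨0, hK⟩ * (clamp (s * K - m) - clamp (t * K - m)) := sum_le_sum e1
    _ = v ⟨0, hK⟩ * (∑ m ∈ range K, clamp (s * K - m) - ∑ m ∈ range K, clamp (t * K - m)) := by
        rw [← sum_sub_distrib, mul_sum]
    _ = v ⟨0, hK⟩ * (s * K - t * K) := by
        rw [sum_clamp K (s * K) (by nlinarith) (by nlinarith),
          sum_clamp K (t * K) (by nlinarith) (by nlinarith)]
    _ = v ⟨0, hK⟩ * K * (s - t) := by ring

noncomputable def Qp (K : ℕ) (p : Fin K → ℝ) (σ : Equiv.Perm (Fin K)) (m : ℕ) : ℝ :=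
  ∑ i ∈ univ.filter (fun i : Fin K => (i : ℕ) < m), p (σ i)

noncomputable def bf (K : ℕ) (a : Fin K → ℝ) (σ : Equiv.Perm (Fin K)) (m : ℕ) : ℝ :=
  if h : m < K then a (σ ⟨m, h⟩) else 0

lemma Qp_zero {K p σ} : Qp K p σ 0 = 0 := by
  unfold Qp
  rw [filter_false_of_mem (fun i _ => by omega)]
  simp

lemma Qp_succ {K p σ} {m : ℕ} (h : m < K) :
    Qp K p σ (m + 1) = Qp K p σ m + p (σ ⟨m, h⟩) := by
  unfold Qp
  have : (univ.filter (fun i : Fin K => (i : ℕ) < m + 1))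
      = insert ⟨m, h⟩ (univ.filter (fun i : Fin K => (i : ℕ) < m)) := by
    ext i
    simp only [mem_filter, mem_univ, true_and, mem_insert, Fin.ext_iff]
    omega
  rw [this, sum_insert (by simp)]
  ring

lemma Qp_of_le {K p σ} {m : ℕ} (h : K ≤ m) : Qp K p σ m = ∑ i, p i := by
  unfold Qp
  rw [filter_true_of_mem (fun i _ => lt_of_lt_of_le i.isLt h)]
  exact Equiv.sum_comp σ p

lemma Qp_mono {K p σ} (hp : ∀ i, 0 ≤ p i) {m m' : ℕ} (h : m ≤ m') :
    Qp K p σ m ≤ Qp K p σ m' := by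
  apply sum_le_sum_of_subset_of_nonneg
  · intro i hi
    simp only [mem_filter, mem_univ, true_and] at *
    omega
  · intro i _ _
    exact hp _

lemma Qp_nonneg {K p σ} (hp : ∀ i, 0 ≤ p i) (m : ℕ) : 0 ≤ Qp K p σ m := by
  rw [← Qp_zero (K := K) (p := p) (σ := σ)]
  exact Qp_mono hp (Nat.zero_le m)

lemma Qp_le_one {K p σ} (hp : ∀ i, 0 ≤ p i) (hps : ∑ i, p i = 1) (m : ℕ) :
    Qp K p σ m ≤ 1 := by
  rcases le_total m K with h | h
  · calc Qp K p σ m ≤ Qp K p σ K := Qp_mono hp h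
      _ = 1 := by rw [Qp_of_le le_rfl, hps]
  · rw [Qp_of_le h, hps]

lemma wowaW_eq {K : ℕ} (v p : Fin K → ℝ) (σ : Equiv.Perm (Fin K)) (a : Fin K → ℝ) :
    wowaW K v p σ a = ∑ m ∈ range K,
      (wstar K v (Qp K p σ (m + 1)) - wstar K v (Qp K p σ m)) * bf K a σ m := by
  unfold wowaW wowaWeight
  have h1 : ∀ j : Fin K, ∑ i ∈ Finset.Iic j, p (σ i) = Qp K p σ (j.1 + 1) := by
    intro j; unfold Qp; congr 1
    ext i
    simp only [mem_Iic, mem_filter, mem_univ, true_and, Fin.le_def]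
    omega
  have h2 : ∀ j : Fin K, ∑ i ∈ Finset.Iio j, p (σ i) = Qp K p σ j.1 := by
    intro j; unfold Qp; congr 1
    ext i
    simp only [mem_Iio, mem_filter, mem_univ, true_and, Fin.lt_def]
  have h3 : ∀ j : Fin K,
      (wstar K v (∑ i ∈ Finset.Iic j, p (σ i)) - wstar K v (∑ i ∈ Finset.Iio j, p (σ i))) * a (σ j)
      = (fun m => (wstar K v (Qp K p σ (m + 1)) - wstar K v (Qp K p σ m)) * bf K a σ m) (j.1) := by
    intro j
    simp only [h1 j, h2 j, bf, dif_pos j.isLt, Fin.eta]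
  rw [sum_congr rfl (fun j _ => h3 j)]
  exact Fin.sum_univ_eq_sum_range
    (fun m => (wstar K v (Qp K p σ (m + 1)) - wstar K v (Qp K p σ m)) * bf K a σ m) K

lemma abel_sum (W b : ℕ → ℝ) (K : ℕ) :
    ∑ m ∈ range K, (W (m + 1) - W m) * b m
      = (∑ m ∈ range K, W (m + 1) * (b m - b (m + 1))) + W K * b K - W 0 * b 0 := by
  induction K with
  | zero => simp
  | succ n ih => rw [sum_range_succ, sum_range_succ, ih]; ring

/-- sorted sequences うuniqueness: pointwise ≤. -/
lemma sorted_apply_le {K : ℕ} (a : Fin K → ℝ) (σ τ : Equiv.Perm (Fin K))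
    (hσ : ∀ i i' : Fin K, i ≤ i' → a (σ i') ≤ a (σ i))
    (hτ : ∀ i i' : Fin K, i ≤ i' → a (τ i') ≤ a (τ i))
    (j : Fin K) : a (σ j) ≤ a (τ j) := by
  by_contra hcon
  push_neg at hcon
  have hsub1 : (Finset.Iic j).image σ ⊆ univ.filter (fun k => a (τ j) < a k) := by
    intro k hk
    rw [mem_image] at hk
    obtain ⟨i, hi, rfl⟩ := hk
    rw [mem_Iic] at hi
    simp only [mem_filter, mem_univ, true_and]
    exact lt_of_lt_of_le hcon (hσ i j hi)
  have hsub2 : univ.filter (fun k => a (τ j) < a k) ⊆ (Finset.Iio j).image τ := by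
    intro k hk
    simp only [mem_filter, mem_univ, true_and] at hk
    rw [mem_image]
    refine ⟨τ.symm k, ?_, by simp⟩
    rw [mem_Iio]
    by_contra hge
    push_neg at hge
    have := hτ j (τ.symm k) hge
    simp only [Equiv.apply_symm_apply] at this
    exact absurd hk (not_lt.2 this)
  have c1 : ((Finset.Iic j).image σ).card = j.1 + 1 := by
    rw [card_image_of_injective _ σ.injective, Fin.card_Iic]
  have c2 : ((Finset.Iio j).image τ).card = j.1 := by
    rw [card_image_of_injective _ τ.injective, Fin.card_Iio]
  have := card_le_card (hsub1.trans hsub2)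
  omega

lemma sorted_bf_eq {K : ℕ} (a : Fin K → ℝ) (σ τ : Equiv.Perm (Fin K))
    (hσ : ∀ i i' : Fin K, i ≤ i' → a (σ i') ≤ a (σ i))
    (hτ : ∀ i i' : Fin K, i ≤ i' → a (τ i') ≤ a (τ i))
    (m : ℕ) : bf K a σ m = bf K a τ m := by
  unfold bf
  split
  · exact le_antisymm (sorted_apply_le a σ τ hσ hτ _) (sorted_apply_le a τ σ hτ hσ _)
  · rfl

lemma Qp_sorted {K : ℕ} (p : Fin K → ℝ) (a : Fin K → ℝ) (σ : Equiv.Perm (Fin K))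
    (hσ : ∀ i i' : Fin K, i ≤ i' → a (σ i') ≤ a (σ i))
    {m : ℕ} (hm : m + 1 < K) (hne : a (σ ⟨m + 1, hm⟩) < a (σ ⟨m, by omega⟩)) :
    Qp K p σ (m + 1) = ∑ k ∈ univ.filter (fun k => a (σ ⟨m + 1, hm⟩) < a k), p k := by
  unfold Qp
  rw [← sum_image (g := σ) (f := p) (fun x _ y _ h => σ.injective h)]
  congr 1
  ext k
  simp only [mem_image, mem_filter, mem_univ, true_and]
  constructor
  · rintro ⟨i, hi, rfl⟩
    have : i ≤ (⟨m, by omega⟩ : Fin K) := by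
      simp only [Fin.le_def, Fin.val_mk]; omega
    exact lt_of_lt_of_le hne (hσ i ⟨m, by omega⟩ this)
  · intro hk
    refine ⟨σ.symm k, ?_, by simp⟩
    by_contra hge
    push_neg at hge
    have : (⟨m + 1, hm⟩ : Fin K) ≤ σ.symm k := by
      simp only [Fin.le_def, Fin.val_mk]; omega
    have h2 := hσ _ _ this
    simp only [Equiv.apply_symm_apply] at h2
    exact absurd hk (not_lt.2 h2)

/-- Tie lemma: two sorting permutations give the same wowa value. -/
lemma sorted_wowaW_eq {K : ℕ} (v p : Fin K → ℝ) (a : Fin K → ℝ) (σ τ : Equiv.Perm (Fin K))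
    (hσ : ∀ i i' : Fin K, i ≤ i' → a (σ i') ≤ a (σ i))
    (hτ : ∀ i i' : Fin K, i ≤ i' → a (τ i') ≤ a (τ i)) :
    wowaW K v p σ a = wowaW K v p τ a := by
  rw [wowaW_eq, wowaW_eq,
    abel_sum (fun m => wstar K v (Qp K p σ m)) (bf K a σ) K,
    abel_sum (fun m => wstar K v (Qp K p τ m)) (bf K a τ) K]
  have hb : ∀ m, bf K a σ m = bf K a τ m := sorted_bf_eq a σ τ hσ hτ
  have hbK : bf K a σ K = 0 := dif_neg (lt_irrefl K)
  have hbK' : bf K a τ K = 0 := dif_neg (lt_irrefl K)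
  have hW0 : wstar K v (Qp K p σ 0) = 0 := by rw [Qp_zero, wstar_zero]
  have hW0' : wstar K v (Qp K p τ 0) = 0 := by rw [Qp_zero, wstar_zero]
  rw [hbK, hbK', hW0, hW0']
  have main : ∑ m ∈ range K, wstar K v (Qp K p σ (m + 1)) * (bf K a σ m - bf K a σ (m + 1))
      = ∑ m ∈ range K, wstar K v (Qp K p τ (m + 1)) * (bf K a τ m - bf K a τ (m + 1)) := by
    refine sum_congr rfl fun m hm => ?_
    rw [mem_range] at hm
    rw [← hb m, ← hb (m + 1)]
    rcases eq_or_ne (bf K a σ m) (bf K a σ (m + 1)) with he | hne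
    · rw [he]; ring
    · have hQ : Qp K p σ (m + 1) = Qp K p τ (m + 1) := by
        rcases eq_or_lt_of_le (Nat.succ_le_of_lt hm) with heq | hlt
        · rw [Qp_of_le heq.symm.le, Qp_of_le heq.symm.le]
        · have hbm : bf K a σ m = a (σ ⟨m, by omega⟩) := dif_pos (by omega)
          have hbm1 : bf K a σ (m + 1) = a (σ ⟨m + 1, hlt⟩) := dif_pos hlt
          have hle : a (σ ⟨m + 1, hlt⟩) ≤ a (σ ⟨m, by omega⟩) :=
            hσ ⟨m, by omega⟩ ⟨m + 1, hlt⟩ (by simp only [Fin.le_def, Fin.val_mk]; omega)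
          have hstrict : a (σ ⟨m + 1, hlt⟩) < a (σ ⟨m, by omega⟩) := by
            rcases lt_or_eq_of_le hle with h | h
            · exact h
            · exact absurd (by rw [hbm, hbm1, h]) hne
          have hstrictτ : a (τ ⟨m + 1, hlt⟩) < a (τ ⟨m, by omega⟩) := by
            have e1 : a (σ ⟨m + 1, hlt⟩) = a (τ ⟨m + 1, hlt⟩) :=
              le_antisymm (sorted_apply_le a σ τ hσ hτ _) (sorted_apply_le a τ σ hτ hσ _)
            have e2 : a (σ ⟨m, by omega⟩) = a (τ ⟨m, by omega⟩) :=
              le_antisymm (sorted_apply_le a σ τ hσ hτ _) (sorted_apply_le a τ σ hτ hσ _)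
            rw [← e1, ← e2]; exact hstrict
          rw [Qp_sorted p a σ hσ hlt hstrict, Qp_sorted p a τ hτ hlt hstrictτ]
          congr 2
          ext k
          have e1 : a (σ ⟨m + 1, hlt⟩) = a (τ ⟨m + 1, hlt⟩) :=
            le_antisymm (sorted_apply_le a σ τ hσ hτ _) (sorted_apply_le a τ σ hτ hσ _)
          simp [e1]
      rw [hQ]
  rw [main]
  ring

lemma antitone_of_adj {K : ℕ} (a : Fin K → ℝ) (σ : Equiv.Perm (Fin K))
    (h : ∀ m (hm : m + 1 < K), a (σ ⟨m + 1, hm⟩) ≤ a (σ ⟨m, by omega⟩)) :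
    ∀ i i' : Fin K, i ≤ i' → a (σ i') ≤ a (σ i) := by
  have key : ∀ d : ℕ, ∀ i : Fin K, ∀ hd : i.1 + d < K, a (σ ⟨i.1 + d, hd⟩) ≤ a (σ i) := by
    intro d
    induction d with
    | zero => intro i hd; simp
    | succ d ih =>
      intro i hd
      have h1 : i.1 + d < K := by omega
      calc a (σ ⟨i.1 + (d + 1), hd⟩) = a (σ ⟨(i.1 + d) + 1, by omega⟩) := by
            congr 2
        _ ≤ a (σ ⟨i.1 + d, h1⟩) := h (i.1 + d) (by omega)
        _ ≤ a (σ i) := ih i h1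
  intro i i' hle
  rw [Fin.le_def] at hle
  have : i' = ⟨i.1 + (i'.1 - i.1), by omega⟩ := by
    apply Fin.ext; simp only [Fin.val_mk]; omega
  rw [this]
  exact key (i'.1 - i.1) i _

lemma swap_lt {K : ℕ} {u w i i' : Fin K} (hw : w.1 = u.1 + 1) (h : i < i')
    (hne : ¬(i = u ∧ i' = w)) :
    Equiv.swap u w i < Equiv.swap u w i' := by
  rw [Fin.lt_def] at h ⊢
  rcases eq_or_ne i u with rfl | hiu
  · rcases eq_or_ne i' w with rfl | h'w
    · exact absurd ⟨rfl, rfl⟩ hne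
    · have h'u : i' ≠ i := fun hc => by rw [hc] at h; omega
      rw [Equiv.swap_apply_left, Equiv.swap_apply_of_ne_of_ne h'u h'w]
      have : i'.1 ≠ w.1 := fun hc => h'w (Fin.ext hc)
      omega
  · rcases eq_or_ne i w with rfl | hiw
    · have h'u : i' ≠ u := fun hc => by rw [hc] at h; omega
      have h'w : i' ≠ i := fun hc => by rw [hc] at h; omega
      rw [Equiv.swap_apply_right, Equiv.swap_apply_of_ne_of_ne h'u h'w]
      omega
    · rw [Equiv.swap_apply_of_ne_of_ne hiu hiw]
      rcases eq_or_ne i' u with rfl | h'u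
      · rw [Equiv.swap_apply_left]
        have h1 : i.1 ≠ i'.1 := fun hc => hiu (Fin.ext hc)
        omega
      · rcases eq_or_ne i' w with rfl | h'w
        · rw [Equiv.swap_apply_right]
          have h1 : i.1 ≠ u.1 := fun hc => hiu (Fin.ext hc)
          have h2 : i.1 ≠ i'.1 := fun hc => hiw (Fin.ext hc)
          omega
        · rw [Equiv.swap_apply_of_ne_of_ne h'u h'w]
          omega

noncomputable def invSet {K : ℕ} (a : Fin K → ℝ) (σ : Equiv.Perm (Fin K)) :
    Finset (Fin K × Fin K) :=
  univ.filter (fun q => q.1 < q.2 ∧ a (σ q.1) < a (σ q.2))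

lemma inv_decrease {K : ℕ} (a : Fin K → ℝ) (σ : Equiv.Perm (Fin K))
    {j : ℕ} (hj : j + 1 < K)
    (hlt : a (σ ⟨j, by omega⟩) < a (σ ⟨j + 1, hj⟩)) :
    (invSet a (σ * Equiv.swap ⟨j, by omega⟩ ⟨j + 1, hj⟩)).card < (invSet a σ).card := by
  set u : Fin K := ⟨j, by omega⟩ with hu
  set w : Fin K := ⟨j + 1, hj⟩ with hw
  set e := Equiv.swap u w with he
  have hew : e w = u := Equiv.swap_apply_right u w
  have heu : e u = w := Equiv.swap_apply_left u w
  have hinj : Function.Injective (fun q : Fin K × Fin K => (e q.1, e q.2)) := by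
    intro q q' hq
    simp only [Prod.mk.injEq] at hq
    exact Prod.ext (e.injective hq.1) (e.injective hq.2)
  have himg : (invSet a (σ * e)).image (fun q => (e q.1, e q.2)) ⊆ (invSet a σ).erase (u, w) := by
    intro q hq
    rw [mem_image] at hq
    obtain ⟨⟨i, i'⟩, hmem, rfl⟩ := hq
    rw [invSet, mem_filter] at hmem
    simp only [mem_univ, true_and, Equiv.Perm.mul_apply] at hmem
    obtain ⟨hlt', hval⟩ := hmem
    have hexc : ¬(i = u ∧ i' = w) := by
      rintro ⟨rfl, rfl⟩
      rw [heu, hew] at hval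
      exact absurd hval (not_lt.2 hlt.le)
    rw [mem_erase]
    refine ⟨?_, ?_⟩
    · rintro hc
      simp only [Prod.mk.injEq] at hc
      have h1 : i = w := e.injective (by rw [hc.1, hew])
      have h2 : i' = u := e.injective (by rw [hc.2, heu])
      rw [h1, h2] at hlt'
      rw [Fin.lt_def] at hlt'
      simp only [hw, hu, Fin.val_mk] at hlt'
      omega
    · simp only [invSet, mem_filter, mem_univ, true_and]
      exact ⟨swap_lt rfl hlt' hexc, hval⟩
  have hmem_uw : (u, w) ∈ invSet a σ := by
    simp only [invSet, mem_filter, mem_univ, true_and]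
    refine ⟨?_, hlt⟩
    rw [Fin.lt_def]; simp [hu, hw]
  calc (invSet a (σ * e)).card
      = ((invSet a (σ * e)).image (fun q => (e q.1, e q.2))).card :=
        (card_image_of_injective _ hinj).symm
    _ ≤ ((invSet a σ).erase (u, w)).card := card_le_card himg
    _ < (invSet a σ).card := by
        rw [card_erase_of_mem hmem_uw]
        have : 0 < (invSet a σ).card := card_pos.2 ⟨_, hmem_uw⟩
        omega

lemma sum_two {K j : ℕ} (F : ℕ → ℝ) (hj : j + 1 < K)
    (h0 : ∀ m ∈ range K, m ≠ j → m ≠ j + 1 → F m = 0) :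
    ∑ m ∈ range K, F m = F j + F (j + 1) := by
  rw [← sum_pair (show j ≠ j + 1 by omega)]
  refine (sum_subset ?_ ?_).symm
  · intro x hx
    simp only [mem_insert, mem_singleton] at hx
    rw [mem_range]; omega
  · intro x hx hnx
    simp only [mem_insert, mem_singleton] at hnx
    push_neg at hnx
    exact h0 x hx hnx.1 hnx.2

lemma exchange {K : ℕ} (v p a : Fin K → ℝ) (hv0 : ∀ i, 0 ≤ v i)
    (hvmono : ∀ i j : Fin K, i ≤ j → v j ≤ v i) (hp : ∀ i, 0 ≤ p i)
    (hps : ∑ i, p i = 1) (hK : 0 < K)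
    (σ : Equiv.Perm (Fin K)) (u w : Fin K) (hw : (w : ℕ) = (u : ℕ) + 1)
    (hle : a (σ u) ≤ a (σ w)) :
    wowaW K v p σ a ≤ wowaW K v p (σ * Equiv.swap u w) a := by
  have hj1 : u.1 + 1 < K := hw ▸ w.isLt
  have hwmk : (⟨u.1 + 1, hj1⟩ : Fin K) = w := Fin.ext hw.symm
  have htu : (σ * Equiv.swap u w) u = σ w := by
    rw [Equiv.Perm.mul_apply, Equiv.swap_apply_left]
  have htw : (σ * Equiv.swap u w) w = σ u := by
    rw [Equiv.Perm.mul_apply, Equiv.swap_apply_right]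
  -- Q equality away from u+1
  have himgF : ∀ m, m ≠ u.1 + 1 →
      (univ.filter (fun i : Fin K => (i : ℕ) < m)).image (Equiv.swap u w)
        = univ.filter (fun i : Fin K => (i : ℕ) < m) := by
    intro m hm
    have hiff : ∀ i : Fin K, ((Equiv.swap u w i : Fin K) : ℕ) < m ↔ (i : ℕ) < m := by
      intro i
      rcases eq_or_ne i u with rfl | hiu
      · rw [Equiv.swap_apply_left]; omega
      · rcases eq_or_ne i w with rfl | hiw
        · rw [Equiv.swap_apply_right]; omega
        · rw [Equiv.swap_apply_of_ne_of_ne hiu hiw]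
    ext k
    simp only [mem_image, mem_filter, mem_univ, true_and]
    constructor
    · rintro ⟨i, hi, rfl⟩
      exact (hiff i).2 hi
    · intro hk
      have h2 := hiff (Equiv.swap u w k)
      rw [Equiv.swap_apply_self] at h2
      exact ⟨Equiv.swap u w k, h2.1 hk, Equiv.swap_apply_self _ _ _⟩
  have hQ : ∀ m, m ≠ u.1 + 1 → Qp K p (σ * Equiv.swap u w) m = Qp K p σ m := by
    intro m hm
    unfold Qp
    calc ∑ i ∈ univ.filter (fun i : Fin K => (i : ℕ) < m), p ((σ * Equiv.swap u w) i)
        = ∑ x ∈ (univ.filter (fun i : Fin K => (i : ℕ) < m)).image (Equiv.swap u w), p (σ x) := by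
          rw [sum_image (fun x _ y _ hxy => (Equiv.swap u w).injective hxy)]
          rfl
      _ = ∑ i ∈ univ.filter (fun i : Fin K => (i : ℕ) < m), p (σ i) := by rw [himgF m hm]
  -- b values
  have hbne : ∀ m, m ≠ u.1 → m ≠ u.1 + 1 →
      bf K a (σ * Equiv.swap u w) m = bf K a σ m := by
    intro m h1 h2
    unfold bf
    split
    · next h =>
      rw [Equiv.Perm.mul_apply, Equiv.swap_apply_of_ne_of_ne
        (Fin.ne_of_val_ne h1) (Fin.ne_of_val_ne (show m ≠ w.1 by omega))]
    · rfl
  have hbj : bf K a (σ * Equiv.swap u w) u.1 = a (σ w) := by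
    unfold bf
    rw [dif_pos u.isLt]
    rw [show ((⟨u.1, u.isLt⟩ : Fin K)) = u from Fin.eta u u.isLt, htu]
  have hbj1 : bf K a (σ * Equiv.swap u w) (u.1 + 1) = a (σ u) := by
    unfold bf
    rw [dif_pos hj1, hwmk, htw]
  have hbgj : bf K a σ u.1 = a (σ u) := by
    unfold bf
    rw [dif_pos u.isLt, show ((⟨u.1, u.isLt⟩ : Fin K)) = u from Fin.eta u u.isLt]
  have hbgj1 : bf K a σ (u.1 + 1) = a (σ w) := by
    unfold bf
    rw [dif_pos hj1, hwmk]
  -- partial sums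
  have hs : Qp K p σ (u.1 + 1) = Qp K p σ u.1 + p (σ u) := Qp_succ u.isLt
  have hs' : Qp K p (σ * Equiv.swap u w) (u.1 + 1)
      = Qp K p (σ * Equiv.swap u w) u.1 + p ((σ * Equiv.swap u w) u) := Qp_succ u.isLt
  rw [htu, hQ u.1 (by omega)] at hs'
  have hB2 := Qp_succ (K := K) (p := p) (σ := σ) hj1
  rw [hwmk] at hB2
  -- assembling
  have key : wowaW K v p (σ * Equiv.swap u w) a - wowaW K v p σ a =
      ∑ m ∈ range K, ((wstar K v (Qp K p (σ * Equiv.swap u w) (m + 1)) -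
          wstar K v (Qp K p (σ * Equiv.swap u w) m)) * bf K a (σ * Equiv.swap u w) m -
        (wstar K v (Qp K p σ (m + 1)) - wstar K v (Qp K p σ m)) * bf K a σ m) := by
    rw [wowaW_eq, wowaW_eq, ← sum_sub_distrib]
  have key2 := sum_two (K := K) (j := u.1)
    (fun m => (wstar K v (Qp K p (σ * Equiv.swap u w) (m + 1)) -
          wstar K v (Qp K p (σ * Equiv.swap u w) m)) * bf K a (σ * Equiv.swap u w) m -
        (wstar K v (Qp K p σ (m + 1)) - wstar K v (Qp K p σ m)) * bf K a σ m) hj1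
    (by
      intro m hm h1 h2
      rw [hQ m h2, hQ (m + 1) (by omega), hbne m h1 h2]
      ring)
  rw [key2] at key
  simp only [hQ u.1 (by omega), hQ (u.1 + 1 + 1) (by omega), hbj, hbj1, hbgj, hbgj1] at key
  -- four point
  have hA0 : 0 ≤ Qp K p σ u.1 := Qp_nonneg hp _
  have hB1 : Qp K p σ (u.1 + 1 + 1) ≤ 1 := Qp_le_one hp hps _
  have hpu : 0 ≤ p (σ u) := hp _
  have hpw : 0 ≤ p (σ w) := hp _
  have four := wstar_fourpoint (v := v) hv0 hvmono hK
    (A := Qp K p σ u.1) (B := Qp K p σ (u.1 + 1 + 1))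
    (s := Qp K p σ (u.1 + 1)) (s' := Qp K p (σ * Equiv.swap u w) (u.1 + 1))
    hA0 hB1 (by linarith) (by linarith) (by linarith) (by linarith) (by linarith)
  have hfac := mul_nonneg (sub_nonneg.2 hle) (sub_nonneg.2 four)
  nlinarith [key, hfac]

lemma le_sorted {K : ℕ} (v p a : Fin K → ℝ) (hv0 : ∀ i, 0 ≤ v i)
    (hvmono : ∀ i j : Fin K, i ≤ j → v j ≤ v i) (hp : ∀ i, 0 ≤ p i)
    (hps : ∑ i, p i = 1) (hK : 0 < K)
    (τ : Equiv.Perm (Fin K)) (hτ : ∀ i i' : Fin K, i ≤ i' → a (τ i') ≤ a (τ i))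
    (σ : Equiv.Perm (Fin K)) : wowaW K v p σ a ≤ wowaW K v p τ a := by
  suffices H : ∀ N (σ : Equiv.Perm (Fin K)), (invSet a σ).card ≤ N →
      wowaW K v p σ a ≤ wowaW K v p τ a from H _ σ le_rfl
  intro N
  induction N using Nat.strong_induction_on with
  | _ N ih =>
    intro σ hσN
    by_cases hs : ∀ m (hm : m + 1 < K), a (σ ⟨m + 1, hm⟩) ≤ a (σ ⟨m, by omega⟩)
    · exact le_of_eq (sorted_wowaW_eq v p a σ τ (antitone_of_adj a σ hs) hτ)
    · push_neg at hs
      obtain ⟨m, hm, hlt⟩ := hs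
      have hdec := inv_decrease a σ hm hlt
      have hstep := exchange v p a hv0 hvmono hp hps hK σ ⟨m, by omega⟩ ⟨m + 1, hm⟩ rfl hlt.le
      exact hstep.trans (ih _ (lt_of_lt_of_le hdec hσN) _ le_rfl)

lemma range_sum_eq_mean {K : ℕ} (p a : Fin K → ℝ) (σ : Equiv.Perm (Fin K)) :
    ∑ m ∈ range K, (Qp K p σ (m + 1) - Qp K p σ m) * bf K a σ m = ∑ k, p k * a k := by
  have h1 : ∀ m ∈ range K, (Qp K p σ (m + 1) - Qp K p σ m) * bf K a σ m
      = if h : m < K then p (σ ⟨m, h⟩) * a (σ ⟨m, h⟩) else 0 := by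
    intro m hm
    rw [mem_range] at hm
    rw [Qp_succ hm]
    unfold bf
    rw [dif_pos hm, dif_pos hm]
    ring
  rw [sum_congr rfl h1,
    ← Fin.sum_univ_eq_sum_range (fun mm => if h : mm < K then p (σ ⟨mm, h⟩) * a (σ ⟨mm, h⟩) else 0) K]
  rw [sum_congr rfl (fun i (_ : i ∈ univ) => by simp [i.isLt] :
    ∀ i ∈ (univ : Finset (Fin K)), (if h : (i : ℕ) < K then p (σ ⟨i, h⟩) * a (σ ⟨i, h⟩) else 0)
      = p (σ i) * a (σ i))]
  exact Equiv.sum_comp σ (fun k => p k * a k)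

lemma wowaW_le_mean {K : ℕ} (v p a : Fin K → ℝ) (hv0 : ∀ i, 0 ≤ v i)
    (hvmono : ∀ i j : Fin K, i ≤ j → v j ≤ v i) (hp : ∀ i, 0 ≤ p i)
    (hps : ∑ i, p i = 1) (hK : 0 < K) (ha : ∀ k, 0 ≤ a k) (σ : Equiv.Perm (Fin K)) :
    wowaW K v p σ a ≤ (K : ℝ) * v ⟨0, hK⟩ * ∑ k, p k * a k := by
  rw [wowaW_eq]
  have step : ∀ m ∈ range K,
      (wstar K v (Qp K p σ (m + 1)) - wstar K v (Qp K p σ m)) * bf K a σ m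
      ≤ (v ⟨0, hK⟩ * K * (Qp K p σ (m + 1) - Qp K p σ m)) * bf K a σ m := by
    intro m _
    refine mul_le_mul_of_nonneg_right ?_ ?_
    · have := wstar_lipschitz (v := v) hv0 hvmono hK
        (s := Qp K p σ (m + 1)) (t := Qp K p σ m)
        (Qp_nonneg (σ := σ) hp m) (Qp_mono (σ := σ) hp (Nat.le_succ m))
        (Qp_le_one (σ := σ) hp hps (m + 1))
      linarith
    · unfold bf; split
      · exact ha _
      · exact le_rfl
  calc ∑ m ∈ range K, (wstar K v (Qp K p σ (m + 1)) - wstar K v (Qp K p σ m)) * bf K a σ m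
      ≤ ∑ m ∈ range K, (v ⟨0, hK⟩ * K * (Qp K p σ (m + 1) - Qp K p σ m)) * bf K a σ m :=
        sum_le_sum step
    _ = (K : ℝ) * v ⟨0, hK⟩ * ∑ m ∈ range K, (Qp K p σ (m + 1) - Qp K p σ m) * bf K a σ m := by
        rw [mul_sum]
        exact sum_congr rfl fun m _ => by ring
    _ = (K : ℝ) * v ⟨0, hK⟩ * ∑ k, p k * a k := by rw [range_sum_eq_mean]

lemma mean_le_wowaW {K : ℕ} (v p a : Fin K → ℝ) (hv0 : ∀ i, 0 ≤ v i)
    (hvs : ∑ j, v j = 1)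
    (hvmono : ∀ i j : Fin K, i ≤ j → v j ≤ v i) (hp : ∀ i, 0 ≤ p i)
    (hps : ∑ i, p i = 1) (hK : 0 < K) (ha : ∀ k, 0 ≤ a k) (σ : Equiv.Perm (Fin K))
    (hσ : ∀ i i' : Fin K, i ≤ i' → a (σ i') ≤ a (σ i)) :
    ∑ k, p k * a k ≤ wowaW K v p σ a := by
  rw [wowaW_eq, abel_sum (fun m => wstar K v (Qp K p σ m)) (bf K a σ) K,
    ← range_sum_eq_mean p a σ, abel_sum (fun m => Qp K p σ m) (bf K a σ) K]
  have hb0 : bf K a σ K = 0 := dif_neg (lt_irrefl K)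
  have hW0 : wstar K v (Qp K p σ 0) = 0 := by rw [Qp_zero, wstar_zero]
  rw [hb0, hW0, Qp_zero]
  have main : ∑ m ∈ range K, Qp K p σ (m + 1) * (bf K a σ m - bf K a σ (m + 1))
      ≤ ∑ m ∈ range K, wstar K v (Qp K p σ (m + 1)) * (bf K a σ m - bf K a σ (m + 1)) := by
    refine sum_le_sum fun m _ => ?_
    refine mul_le_mul_of_nonneg_right
      (wstar_ge_id hv0 hvmono hK hvs (Qp_nonneg (σ := σ) hp _) (Qp_le_one (σ := σ) hp hps _)) ?_
    unfold bf
    split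
    · next h1 =>
      split
      · next h2 =>
        have := hσ ⟨m, h1⟩ ⟨m + 1, h2⟩ (by simp only [Fin.le_def, Fin.val_mk]; omega)
        linarith
      · have := ha (σ ⟨m, h1⟩)
        linarith
    · split
      · next h2 => omega
      · simp
  linarith

lemma wowaW_linear {K n : ℕ} (v p : Fin K → ℝ) (σ : Equiv.Perm (Fin K))
    (c : Fin K → Fin n → ℝ) (X : Finset (Fin n)) :
    wowaW K v p σ (fun j => ∑ i ∈ X, c j i) = ∑ i ∈ X, wowaW K v p σ (fun j => c j i) := by
  unfold wowaW
  simp_rw [Finset.mul_sum]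
  exact Finset.sum_comm

end WA

/-- with a γ-approximate minimizer of the aggregated costs,
WOWA(X̂) ≤ γ·K·v₁·WOWA(X) for every feasible X. -/
theorem wowa_approx_gamma (K n : ℕ) (hK : 0 < K) (γ : ℝ) (hγ : 1 ≤ γ)
    (v p : Fin K → ℝ)
    (hv0 : ∀ j, 0 ≤ v j) (hvs : ∑ j, v j = 1)
    (hvmono : ∀ i j : Fin K, i ≤ j → v j ≤ v i)
    (hp0 : ∀ j, 0 < p j) (hps : ∑ j, p j = 1)
    (c : Fin K → Fin n → ℝ) (hc : ∀ j i, 0 ≤ c j i)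
    (Φ : Finset (Finset (Fin n)))
    (σc : Fin n → Equiv.Perm (Fin K))
    (hσc : ∀ i, ∀ j j' : Fin K, j ≤ j' → c (σc i j') i ≤ c (σc i j) i)
    (σS : Finset (Fin n) → Equiv.Perm (Fin K))
    (hσS : ∀ X : Finset (Fin n), ∀ j j' : Fin K, j ≤ j' →
      (∑ i ∈ X, c (σS X j') i) ≤ ∑ i ∈ X, c (σS X j) i)
    (Xhat : Finset (Fin n)) (hXhatΦ : Xhat ∈ Φ)
    (hXhat : ∀ X ∈ Φ, (∑ i ∈ Xhat, wowaW K v p (σc i) (fun j => c j i)) ≤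
      γ * ∑ i ∈ X, wowaW K v p (σc i) (fun j => c j i)) :
    ∀ X ∈ Φ,
      wowaW K v p (σS Xhat) (fun j => ∑ i ∈ Xhat, c j i) ≤
        γ * (K : ℝ) * v ⟨0, hK⟩ *
          wowaW K v p (σS X) (fun j => ∑ i ∈ X, c j i) := by
  intro X hX
  have hγ0 : (0:ℝ) ≤ γ := by linarith
  have hv00 : 0 ≤ v ⟨0, hK⟩ := hv0 _
  have hKv0 : (0:ℝ) ≤ (K : ℝ) * v ⟨0, hK⟩ := mul_nonneg (Nat.cast_nonneg K) hv00
  have hp' : ∀ i, 0 ≤ p i := fun i => (hp0 i).le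
  have step2 : ∀ i ∈ Xhat, wowaW K v p (σS Xhat) (fun j => c j i)
      ≤ wowaW K v p (σc i) (fun j => c j i) := fun i _ =>
    WA.le_sorted v p (fun j => c j i) hv0 hvmono hp' hps hK (σc i) (hσc i) (σS Xhat)
  have step4 : ∀ i, wowaW K v p (σc i) (fun j => c j i)
      ≤ (K : ℝ) * v ⟨0, hK⟩ * ∑ k, p k * c k i := fun i =>
    WA.wowaW_le_mean v p (fun j => c j i) hv0 hvmono hp' hps hK (fun k => hc k i) (σc i)
  have step5 : ∑ k, p k * ∑ i ∈ X, c k i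
      ≤ wowaW K v p (σS X) (fun j => ∑ i ∈ X, c j i) :=
    WA.mean_le_wowaW v p (fun j => ∑ i ∈ X, c j i) hv0 hvs hvmono hp' hps hK
      (fun k => Finset.sum_nonneg fun i _ => hc k i) (σS X) (hσS X)
  have swap_sum : ∑ i ∈ X, ∑ k, p k * c k i = ∑ k, p k * ∑ i ∈ X, c k i := by
    rw [Finset.sum_comm]
    exact Finset.sum_congr rfl fun k _ => (Finset.mul_sum _ _ _).symm
  calc wowaW K v p (σS Xhat) (fun j => ∑ i ∈ Xhat, c j i)
      = ∑ i ∈ Xhat, wowaW K v p (σS Xhat) (fun j => c j i) :=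
        WA.wowaW_linear v p (σS Xhat) c Xhat
    _ ≤ ∑ i ∈ Xhat, wowaW K v p (σc i) (fun j => c j i) := Finset.sum_le_sum step2
    _ ≤ γ * ∑ i ∈ X, wowaW K v p (σc i) (fun j => c j i) := hXhat X hX
    _ ≤ γ * ∑ i ∈ X, ((K : ℝ) * v ⟨0, hK⟩ * ∑ k, p k * c k i) :=
        mul_le_mul_of_nonneg_left (Finset.sum_le_sum fun i _ => step4 i) hγ0
    _ = γ * ((K : ℝ) * v ⟨0, hK⟩ * ∑ k, p k * ∑ i ∈ X, c k i) := by
        rw [← Finset.mul_sum, swap_sum]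
    _ ≤ γ * ((K : ℝ) * v ⟨0, hK⟩ * wowaW K v p (σS X) (fun j => ∑ i ∈ X, c j i)) :=
        mul_le_mul_of_nonneg_left (mul_le_mul_of_nonneg_left step5 hKv0) hγ0
    _ = γ * (K : ℝ) * v ⟨0, hK⟩ * wowaW K v p (σS X) (fun j => ∑ i ∈ X, c j i) := by
        ring
end

section
/- (Riemann representation, formula (1)) For any a ∈ ℝ^K with sorting permutation σ (a_{σ(1)} ≥ … ≥ a_{σ(K)}) and breakpoints α_0 = 0, α_i = Σ_{j≤i} p_{σ(j)}, define the step function h(θ) = a_{σ(i)} for θ ∈ (α_{i−1}, α_i]. Then wowa_{(v,p)}(a) = K · Σ_{j=1}^K v_j ∫_{(j−1)/K}^{j/K} h(θ) dθ. -/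
open Finset

lemma cl_mono : Monotone (fun x : ℝ => min 1 (max 0 x)) := by
  intro x y hxy
  exact min_le_min le_rfl (max_le_max le_rfl hxy)

lemma cl_nonneg (x : ℝ) : 0 ≤ min 1 (max 0 x) := by
  simp [min_def, max_def]; split_ifs <;> linarith

lemma cl_le_of_pos {x : ℝ} (hx : 0 < x) : min 1 (max 0 x) ≤ x := by
  simp only [min_def, max_def]; split_ifs <;> linarith

lemma le_cl_of_lt_one {x : ℝ} (hx : min 1 (max 0 x) < 1) : x ≤ min 1 (max 0 x) := by
  simp only [min_def, max_def] at *; split_ifs at * <;> linarith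

lemma cl_of_nonpos {x : ℝ} (hx : x ≤ 0) : min 1 (max 0 x) = 0 := by
  simp only [min_def, max_def]; split_ifs <;> linarith

lemma cl_of_one_le {x : ℝ} (hx : 1 ≤ x) : min 1 (max 0 x) = 1 := by
  simp only [min_def, max_def]; split_ifs <;> linarith

/-- formula (1): Riemann representation of WOWA via the
nonincreasing step function h. -/
theorem wowa_riemann (K : ℕ) (hK : 0 < K) (v p : Fin K → ℝ)
    (hv0 : ∀ j, 0 ≤ v j) (hvs : ∑ j, v j = 1)
    (hp0 : ∀ j, 0 ≤ p j) (hps : ∑ j, p j = 1)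
    (a : Fin K → ℝ) (σ : Equiv.Perm (Fin K))
    (hσ : ∀ i j : Fin K, i ≤ j → a (σ j) ≤ a (σ i))
    (h : ℝ → ℝ)
    (hh : ∀ i : Fin K, ∀ θ : ℝ,
      (∑ j ∈ Finset.Iio i, p (σ j)) < θ → θ ≤ (∑ j ∈ Finset.Iic i, p (σ j)) →
      h θ = a (σ i)) :
    wowaW K v p σ a =
      (K : ℝ) * ∑ j : Fin K, v j *
        ∫ θ in ((j.1 : ℝ) / (K : ℝ))..(((j.1 : ℝ) + 1) / (K : ℝ)), h θ := by
  classical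
  have hKR : (0 : ℝ) < (K : ℝ) := by exact_mod_cast hK
  set A : ℕ → ℝ := fun n => ∑ j ∈ Finset.univ.filter (fun j : Fin K => (j : ℕ) < n), p (σ j)
    with hA
  have hAmono : Monotone A := by
    intro m n hmn
    apply Finset.sum_le_sum_of_subset_of_nonneg
    · intro j hj
      simp only [Finset.mem_filter] at *
      exact ⟨hj.1, lt_of_lt_of_le hj.2 hmn⟩
    · intro j _ _; exact hp0 _
  have hA0 : A 0 = 0 := by simp [hA]
  have hAK : A K = 1 := by
    have hfil : (Finset.univ.filter (fun j : Fin K => (j : ℕ) < K)) = Finset.univ :=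
      Finset.filter_true_of_mem (fun j _ => j.isLt)
    simp only [hA]
    rw [hfil, Equiv.sum_comp σ p]
    exact hps
  have hIio : ∀ j : Fin K, ∑ i ∈ Finset.Iio j, p (σ i) = A j.1 := by
    intro j
    apply Finset.sum_congr _ (fun _ _ => rfl)
    ext i
    simp only [Finset.mem_Iio, Finset.mem_filter, Finset.mem_univ, true_and, Fin.lt_def]
  have hIic : ∀ j : Fin K, ∑ i ∈ Finset.Iic j, p (σ i) = A (j.1 + 1) := by
    intro j
    apply Finset.sum_congr _ (fun _ _ => rfl)
    ext i
    simp only [Finset.mem_Iic, Finset.mem_filter, Finset.mem_univ, true_and, Fin.le_def, Nat.lt_succ_iff]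
  -- the clipped breakpoints
  set c : ℕ → ℕ → ℝ := fun i n => ((i : ℝ) + min 1 (max 0 (A n * K - i))) / K with hc
  have hcmono : ∀ i : ℕ, Monotone (c i) := by
    intro i m n hmn
    have h1 : min 1 (max 0 (A m * K - i)) ≤ min 1 (max 0 (A n * K - i)) :=
      cl_mono (sub_le_sub_right (mul_le_mul_of_nonneg_right (hAmono hmn) hKR.le) _)
    simp only [hc]
    gcongr
  have hKne : (K : ℝ) ≠ 0 := hKR.ne'
  have hc0 : ∀ i : Fin K, c i.1 0 = (i.1 : ℝ) / K := by
    intro i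
    simp only [hc, hA0]
    rw [cl_of_nonpos (by nlinarith [(Nat.cast_nonneg i.1 : (0:ℝ) ≤ (i.1 : ℝ))])]
    ring
  have hcK : ∀ i : Fin K, c i.1 K = ((i.1 : ℝ) + 1) / K := by
    intro i
    have hi : (i.1 : ℝ) + 1 ≤ (K : ℝ) := by exact_mod_cast i.isLt
    simp only [hc, hAK]
    rw [cl_of_one_le (by linarith)]
  have key : ∀ i j : Fin K,
      IntervalIntegrable h MeasureTheory.volume (c i.1 j.1) (c i.1 (j.1 + 1)) ∧
      (∫ θ in c i.1 j.1..c i.1 (j.1 + 1), h θ) = a (σ j) * (c i.1 (j.1 + 1) - c i.1 j.1) := by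
    intro i j
    have hxy : c i.1 j.1 ≤ c i.1 (j.1 + 1) := hcmono i.1 (Nat.le_succ _)
    have heq : ∀ θ ∈ Set.Ioc (c i.1 j.1) (c i.1 (j.1 + 1)), h θ = a (σ j) := by
      intro θ hθ
      have hxy' : c i.1 j.1 < c i.1 (j.1 + 1) := lt_of_lt_of_le hθ.1 hθ.2
      have hcl : min 1 (max 0 (A j.1 * K - i.1)) < min 1 (max 0 (A (j.1 + 1) * K - i.1)) := by
        by_contra hcon
        push_neg at hcon
        have hyx : c i.1 (j.1 + 1) ≤ c i.1 j.1 := by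
          simp only [hc]; gcongr
        linarith
      have h1 : min 1 (max 0 (A j.1 * K - i.1)) < 1 := lt_of_lt_of_le hcl (min_le_left _ _)
      have h2 : A j.1 * K - i.1 ≤ min 1 (max 0 (A j.1 * K - i.1)) := le_cl_of_lt_one h1
      have h3 : 0 < min 1 (max 0 (A (j.1 + 1) * K - i.1)) := lt_of_le_of_lt (cl_nonneg _) hcl
      have h4 : 0 < A (j.1 + 1) * K - i.1 := by
        by_contra hcon
        push_neg at hcon
        rw [cl_of_nonpos hcon] at h3
        exact lt_irrefl _ h3
      have h5 : min 1 (max 0 (A (j.1 + 1) * K - i.1)) ≤ A (j.1 + 1) * K - i.1 := cl_le_of_pos h4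
      have hx : A j.1 ≤ c i.1 j.1 := by
        simp only [hc]; rw [le_div_iff₀ hKR]; linarith
      have hy : c i.1 (j.1 + 1) ≤ A (j.1 + 1) := by
        simp only [hc]; rw [div_le_iff₀ hKR]; linarith
      exact hh j θ (by rw [hIio]; exact lt_of_le_of_lt hx hθ.1)
        (by rw [hIic]; exact le_trans hθ.2 hy)
    constructor
    · refine (intervalIntegrable_const (c := a (σ j))).congr ?_
      rw [Set.uIoc_of_le hxy]
      exact fun θ hθ => (heq θ hθ).symm
    · rw [intervalIntegral.integral_congr_ae (g := fun _ => a (σ j))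
        (Filter.Eventually.of_forall fun θ hθ => heq θ (by rwa [Set.uIoc_of_le hxy] at hθ)),
        intervalIntegral.integral_const, smul_eq_mul, mul_comm]
  have hint : ∀ i : Fin K, (∫ θ in ((i.1 : ℝ) / K)..(((i.1 : ℝ) + 1) / K), h θ)
      = ∑ j : Fin K, a (σ j) * (c i.1 (j.1 + 1) - c i.1 j.1) := by
    intro i
    have hadj := intervalIntegral.sum_integral_adjacent_intervals
      (μ := MeasureTheory.volume) (f := h) (a := c i.1) (n := K)
      (fun k hk => (key i ⟨k, hk⟩).1)
    rw [hc0 i, hcK i] at hadj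
    calc (∫ θ in ((i.1 : ℝ) / K)..(((i.1 : ℝ) + 1) / K), h θ)
        = ∑ k ∈ Finset.range K, ∫ θ in c i.1 k..c i.1 (k + 1), h θ := hadj.symm
      _ = ∑ j : Fin K, ∫ θ in c i.1 j.1..c i.1 (j.1 + 1), h θ :=
          (Fin.sum_univ_eq_sum_range (fun k => ∫ θ in c i.1 k..c i.1 (k + 1), h θ) K).symm
      _ = ∑ j : Fin K, a (σ j) * (c i.1 (j.1 + 1) - c i.1 j.1) :=
          Finset.sum_congr rfl fun j _ => (key i j).2
  have hR : (K : ℝ) * (∑ i : Fin K, v i * ∫ θ in ((i.1 : ℝ) / K)..(((i.1 : ℝ) + 1) / K), h θ)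
      = ∑ j : Fin K, ∑ i : Fin K,
          (K : ℝ) * (v i * (a (σ j) * (c i.1 (j.1 + 1) - c i.1 j.1))) := by
    rw [Finset.mul_sum]
    rw [Finset.sum_congr rfl (fun i (_ : i ∈ Finset.univ) => by
      rw [hint i, Finset.mul_sum, Finset.mul_sum])]
    exact Finset.sum_comm
  rw [hR]
  simp only [wowaW, wowaWeight, wstar, hIic, hIio, ← Finset.sum_sub_distrib, Finset.sum_mul]
  apply Finset.sum_congr rfl
  intro j _
  apply Finset.sum_congr rfl
  intro i _
  simp only [hc]
  field_simp
  ring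
end
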